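/- arXiv:2209.11363 — 2 statements merged into one kernel-verified Lean document; each statement's English description precedes it below -/
import Mathlib

section
/- Let U be a one-sample U-statistic of order m based on n independent random variables: U = (1/n^(m)) Σ g(W_{i₁},…,W_{i_m}), where the sum is over all m-tuples of distinct indices in {1,…,n}, n^(m) = n(n−1)⋯(n−m+1), and a ≤ g ≤ b pointwise. Then for any t > 0 and m ≤ n, Pr(|U − E[U]| > t) ≤ 2 exp(−2⌊n/m⌋t²/(b−a)²). -/
open MeasureTheory ProbabilityTheory Real Finset

open Real

lemma UAux.key_ineq {p u : ℝ} (hp0 : 0 ≤ p) (hp1 : p ≤ 1) (hu : 0 ≤ u) :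
    1 - p + p * Real.exp u ≤ Real.exp (p * u + u ^ 2 / 8) := by
  set D : ℝ → ℝ := fun x => 1 - p + p * Real.exp x with hDdef
  have hDpos : ∀ x, 0 < D x := by
    intro x
    rcases eq_or_lt_of_le hp1 with h | h
    · have : p = 1 := h
      simp only [D, this]
      simpa using Real.exp_pos x
    · have h1 : 0 < 1 - p := by linarith
      have h2 : 0 ≤ p * Real.exp x := mul_nonneg hp0 (Real.exp_pos x).le
      simp only [D]; linarith
  set f : ℝ → ℝ := fun x => p * x + x ^ 2 / 8 - Real.log (D x) with hfdef
  set f' : ℝ → ℝ := fun x => p + x / 4 - p * Real.exp x / D x with hf'def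
  have hD : ∀ x, HasDerivAt D (p * Real.exp x) x := fun x =>
    ((Real.hasDerivAt_exp x).const_mul p).const_add (1 - p)
  have hf : ∀ x, HasDerivAt f (f' x) x := by
    intro x
    have h1 : HasDerivAt (fun x : ℝ => p * x + x ^ 2 / 8)
        (p + 2 * x / 8) x := by
      have := ((hasDerivAt_id x).const_mul p).add ((hasDerivAt_pow 2 x).div_const 8)
      simpa [Pi.add_def] using this
    have h2 : HasDerivAt (fun x => Real.log (D x)) (p * Real.exp x / D x) x :=
      (hD x).log (hDpos x).ne'
    have := h1.sub h2
    exact this.congr_deriv (by simp only [f']; ring)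
  have hf' : ∀ x, HasDerivAt f'
      (1 / 4 - (p * Real.exp x * D x - p * Real.exp x * (p * Real.exp x)) / (D x) ^ 2) x := by
    intro x
    have h1 : HasDerivAt (fun x : ℝ => p + x / 4) (1 / 4) x := by
      simpa using ((hasDerivAt_id x).div_const 4).const_add p
    have h2 : HasDerivAt (fun x => p * Real.exp x / D x)
        ((p * Real.exp x * D x - p * Real.exp x * (p * Real.exp x)) / (D x) ^ 2) x :=
      ((Real.hasDerivAt_exp x).const_mul p).div (hD x) (hDpos x).ne'
    exact h1.sub h2
  have hf''nonneg : ∀ x, 0 ≤ 1 / 4 -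
      (p * Real.exp x * D x - p * Real.exp x * (p * Real.exp x)) / (D x) ^ 2 := by
    intro x
    have hDx := hDpos x
    rw [sub_nonneg, div_le_iff₀ (by positivity : (0:ℝ) < (D x) ^ 2)]
    have hx : D x = 1 - p + p * Real.exp x := rfl
    have h1 : 0 ≤ 1 - p := by linarith
    have h2 : 0 ≤ p * Real.exp x := mul_nonneg hp0 (Real.exp_pos x).le
    nlinarith [sq_nonneg (1 - p - p * Real.exp x)]
  have hf'mono : Monotone f' := by
    apply monotone_of_deriv_nonneg
    · exact fun x => (hf' x).differentiableAt
    · intro x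
      rw [(hf' x).deriv]
      exact hf''nonneg x
  have hf'0 : f' 0 = 0 := by
    simp only [f', hf'def, D]
    rw [Real.exp_zero]
    field_simp
    ring
  have hf'nonneg : ∀ x ∈ Set.Ici (0:ℝ), 0 ≤ f' x := by
    intro x hx
    rw [← hf'0]
    exact hf'mono hx
  have hfmono : MonotoneOn f (Set.Ici 0) := by
    apply monotoneOn_of_deriv_nonneg (convex_Ici 0)
    · exact Continuous.continuousOn (by
        fun_prop (disch := intro x; exact (hDpos x).ne'))
    · intro x hx
      exact (hf x).differentiableAt.differentiableWithinAt
    · intro x hx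
      rw [(hf x).deriv]
      exact hf'nonneg x (interior_subset hx)
  have hf0 : f 0 = 0 := by
    simp only [f, hfdef, D]
    rw [Real.exp_zero]
    norm_num
  have hfu : 0 ≤ f u := by
    rw [← hf0]
    exact hfmono Set.self_mem_Ici hu hu
  have : Real.log (D u) ≤ p * u + u ^ 2 / 8 := by
    simp only [f, hfdef] at hfu; linarith
  calc 1 - p + p * Real.exp u = D u := rfl
    _ ≤ Real.exp (p * u + u ^ 2 / 8) := by
        rw [← Real.exp_log (hDpos u)]
        exact Real.exp_le_exp.2 this

/-- Integrability of a pointwise-bounded measurable function. -/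
lemma UAux.integrable_of_bounded {Ω : Type*} [MeasurableSpace Ω] {μ : Measure Ω}
    [IsFiniteMeasure μ] {X : Ω → ℝ} (hX : AEStronglyMeasurable X μ) {a b : ℝ}
    (h : ∀ ω, X ω ∈ Set.Icc a b) : Integrable X μ := by
  refine (integrable_const (max |a| |b|)).mono' hX ?_
  filter_upwards with ω
  rw [Real.norm_eq_abs, abs_le]
  constructor
  · have := (h ω).1
    have : -max |a| |b| ≤ a := by
      have := neg_abs_le a
      have := le_max_left |a| |b|
      linarith
    linarith [(h ω).1]
  · have := (h ω).2
    have : b ≤ max |a| |b| := le_trans (le_abs_self b) (le_max_right _ _)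
    linarith

/-- Hoeffding's lemma. -/
lemma UAux.mgf_le {Ω : Type*} [MeasurableSpace Ω] {μ : Measure Ω} [IsProbabilityMeasure μ]
    {X : Ω → ℝ} (hX : Measurable X) {a b s : ℝ} (hab : a < b) (hs : 0 ≤ s)
    (hXab : ∀ ω, X ω ∈ Set.Icc a b) :
    ∫ ω, Real.exp (s * X ω) ∂μ ≤
      Real.exp (s * (∫ ω, X ω ∂μ) + s ^ 2 * (b - a) ^ 2 / 8) := by
  have hba : (0:ℝ) < b - a := by linarith
  have hXint : Integrable X μ := UAux.integrable_of_bounded hX.aestronglyMeasurable hXab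
  have hexpint : Integrable (fun ω => Real.exp (s * X ω)) μ := by
    refine UAux.integrable_of_bounded ((hX.const_mul s).exp).aestronglyMeasurable
      (a := 0) (b := Real.exp (s * b)) fun ω => ⟨(Real.exp_pos _).le, ?_⟩
    exact Real.exp_le_exp.2 (mul_le_mul_of_nonneg_left (hXab ω).2 hs)
  -- pointwise convexity bound
  have hpt : ∀ ω, Real.exp (s * X ω) ≤
      (b - X ω) / (b - a) * Real.exp (s * a) + (X ω - a) / (b - a) * Real.exp (s * b) := by
    intro ω
    have h1 := (hXab ω).1
    have h2 := (hXab ω).2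
    have hθ : 0 ≤ (b - X ω) / (b - a) := div_nonneg (by linarith) hba.le
    have hη : 0 ≤ (X ω - a) / (b - a) := div_nonneg (by linarith) hba.le
    have hsum : (b - X ω) / (b - a) + (X ω - a) / (b - a) = 1 := by
      field_simp
      ring
    have := convexOn_exp.2 (Set.mem_univ (s * a)) (Set.mem_univ (s * b)) hθ hη hsum
    simp only [smul_eq_mul] at this
    have harg : (b - X ω) / (b - a) * (s * a) + (X ω - a) / (b - a) * (s * b) = s * X ω := by
      field_simp
      ring
    rwa [harg] at this
  -- integrate
  have hfun : (fun ω => (b - X ω) / (b - a) * Real.exp (s * a)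
        + (X ω - a) / (b - a) * Real.exp (s * b))
      = fun ω => ((Real.exp (s * b) - Real.exp (s * a)) / (b - a)) * X ω
          + (b * Real.exp (s * a) - a * Real.exp (s * b)) / (b - a) := by
    funext ω
    field_simp
    ring
  have hRint : Integrable
      (fun ω => (b - X ω) / (b - a) * Real.exp (s * a) + (X ω - a) / (b - a) * Real.exp (s * b)) μ := by
    rw [hfun]
    exact (hXint.const_mul _).add (integrable_const _)
  have hIle := integral_mono hexpint hRint hpt
  set md := ∫ ω, X ω ∂μ with hmd
  have hRval : ∫ ω, ((b - X ω) / (b - a) * Real.exp (s * a)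
        + (X ω - a) / (b - a) * Real.exp (s * b)) ∂μ
      = (b - md) / (b - a) * Real.exp (s * a) + (md - a) / (b - a) * Real.exp (s * b) := by
    rw [hfun, integral_add (hXint.const_mul _) (integrable_const _),
      integral_const_mul, integral_const]
    simp only [measure_univ, probReal_univ, ENNReal.toReal_one, smul_eq_mul, one_mul, ← hmd]
    field_simp
    ring
  rw [hRval] at hIle
  -- bounds on the mean
  have hmda : a ≤ md := by
    have := integral_mono (integrable_const a) hXint (fun ω => (hXab ω).1)
    simpa using this
  have hmdb : md ≤ b := by
    have := integral_mono hXint (integrable_const b) (fun ω => (hXab ω).2)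
    simpa using this
  -- apply key inequality
  set p := (md - a) / (b - a) with hp
  have hp0 : 0 ≤ p := div_nonneg (by linarith) hba.le
  have hp1 : p ≤ 1 := by
    rw [hp, div_le_one hba]; linarith
  have hkey := UAux.key_ineq hp0 hp1 (mul_nonneg hs hba.le : 0 ≤ s * (b - a))
  have h1p : (b - md) / (b - a) = 1 - p := by
    rw [hp]; field_simp
    ring
  have hexpb : Real.exp (s * b) = Real.exp (s * a) * Real.exp (s * (b - a)) := by
    rw [← Real.exp_add]; ring_nf
  calc ∫ ω, Real.exp (s * X ω) ∂μ
      ≤ (b - md) / (b - a) * Real.exp (s * a) + (md - a) / (b - a) * Real.exp (s * b) := hIle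
    _ = Real.exp (s * a) * (1 - p + p * Real.exp (s * (b - a))) := by
        rw [h1p, hexpb, ← hp]; ring
    _ ≤ Real.exp (s * a) * Real.exp (p * (s * (b - a)) + (s * (b - a)) ^ 2 / 8) := by
        exact mul_le_mul_of_nonneg_left hkey (Real.exp_pos _).le
    _ = Real.exp (s * a + (p * (s * (b - a)) + (s * (b - a)) ^ 2 / 8)) := by
        rw [← Real.exp_add]
    _ = Real.exp (s * md + s ^ 2 * (b - a) ^ 2 / 8) := by
        congr 1
        rw [hp]
        field_simp
        ring

/-- Every injective map extends to a permutation: there is `σ` with `σ ∘ ι = f`. -/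
lemma UAux.exists_perm_comp {m n : ℕ} (ι : Fin m → Fin n) (hι : Function.Injective ι)
    (f : Fin m → Fin n) (hf : Function.Injective f) :
    ∃ σ : Equiv.Perm (Fin n), σ ∘ ι = f := by
  classical
  have h1 : Fintype.card {x : Fin n // x ∈ Set.range ι} = m :=
    (Fintype.card_congr (Equiv.ofInjective ι hι)).symm.trans (Fintype.card_fin m)
  have h2 : Fintype.card {x : Fin n // x ∈ Set.range f} = m :=
    (Fintype.card_congr (Equiv.ofInjective f hf)).symm.trans (Fintype.card_fin m)
  have hcard : Fintype.card {x : Fin n // x ∉ Set.range ι}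
      = Fintype.card {x : Fin n // x ∉ Set.range f} := by
    have c1 := Fintype.card_subtype_compl (fun x : Fin n => x ∈ Set.range ι)
    have c2 := Fintype.card_subtype_compl (fun x : Fin n => x ∈ Set.range f)
    rw [c1, c2, h1, h2]
  let e₁ : {x : Fin n // x ∈ Set.range ι} ≃ {x : Fin n // x ∈ Set.range f} :=
    (Equiv.ofInjective ι hι).symm.trans (Equiv.ofInjective f hf)
  let e₂ : {x : Fin n // x ∉ Set.range ι} ≃ {x : Fin n // x ∉ Set.range f} :=
    Fintype.equivOfCardEq hcard
  refine ⟨((Equiv.sumCompl (· ∈ Set.range ι)).symm.trans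
    ((Equiv.sumCongr e₁ e₂).trans (Equiv.sumCompl (· ∈ Set.range f)))), ?_⟩
  funext i
  have h1 : (Equiv.sumCompl (· ∈ Set.range ι)).symm (ι i) = Sum.inl ⟨ι i, ⟨i, rfl⟩⟩ :=
    Equiv.sumCompl_symm_apply_of_pos ⟨i, rfl⟩
  simp only [Function.comp_apply, Equiv.trans_apply, h1, Equiv.sumCongr_apply, Sum.map_inl,
    Equiv.sumCompl_apply_inl]
  show (e₁ ⟨ι i, ⟨i, rfl⟩⟩ : Fin n) = f i
  have : e₁ ⟨ι i, ⟨i, rfl⟩⟩ = Equiv.ofInjective f hf i := by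
    simp only [e₁, Equiv.trans_apply]
    congr 1
    exact (Equiv.ofInjective ι hι).symm_apply_eq.2 rfl
  rw [this]
  rfl

lemma UAux.sum_perm {n m : ℕ} (ι : Fin m → Fin n) (hι : Function.Injective ι)
    (F : {f : Fin m → Fin n // Function.Injective f} → ℝ) :
    (n.descFactorial m : ℝ) * ∑ σ : Equiv.Perm (Fin n), F ⟨σ ∘ ι, σ.injective.comp hι⟩
      = (n.factorial : ℝ) * ∑ f, F f := by
  classical
  set Φ : Equiv.Perm (Fin n) → {f : Fin m → Fin n // Function.Injective f} :=
    fun σ => ⟨σ ∘ ι, σ.injective.comp hι⟩ with hΦ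
  have hsurj : Function.Surjective Φ := by
    rintro ⟨f, hf⟩
    obtain ⟨σ, hσ⟩ := UAux.exists_perm_comp ι hι f hf
    exact ⟨σ, Subtype.ext hσ⟩
  set c : ℕ := (univ.filter fun σ : Equiv.Perm (Fin n) => Φ σ = Φ 1).card with hc
  have hfib : ∀ y : {f : Fin m → Fin n // Function.Injective f},
      (univ.filter fun σ => Φ σ = y).card = c := by
    intro y
    obtain ⟨σ₁, hσ₁⟩ := hsurj y
    have hy : (y : Fin m → Fin n) = σ₁ ∘ ι := (congrArg Subtype.val hσ₁).symm
    rw [hc]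
    apply Finset.card_bij' (fun τ _ => σ₁⁻¹ * τ) (fun τ _ => σ₁ * τ)
    · intro τ hτ
      simp only [mem_filter, mem_univ, true_and] at hτ ⊢
      have hτ' : (τ : Fin n → Fin n) ∘ ι = σ₁ ∘ ι := by
        rw [← hy]; exact congrArg Subtype.val hτ
      apply Subtype.ext
      funext i
      have := congrFun hτ' i
      simp only [Function.comp_apply] at this
      simp only [Φ, Function.comp_apply, Equiv.Perm.mul_apply, Equiv.Perm.one_apply, this]
      exact Equiv.symm_apply_apply _ _
    · intro τ hτ
      simp only [mem_filter, mem_univ, true_and] at hτ ⊢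
      have hτ' : (τ : Fin n → Fin n) ∘ ι = ι := by
        have := congrArg Subtype.val hτ
        simpa [Φ] using this
      apply Subtype.ext
      rw [hy]
      funext i
      have := congrFun hτ' i
      simp only [Function.comp_apply] at this
      simp only [Φ, Function.comp_apply, Equiv.Perm.mul_apply, this]
    · intro τ _; group
    · intro τ _; group
  have hsum : ∀ (G : {f : Fin m → Fin n // Function.Injective f} → ℝ),
      ∑ σ : Equiv.Perm (Fin n), G (Φ σ) = c • ∑ y, G y := by
    intro G
    rw [Finset.sum_comp G Φ, Finset.image_univ_of_surjective hsurj, Finset.smul_sum]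
    exact Finset.sum_congr rfl fun y _ => by rw [hfib y]
  have hcount : c * Fintype.card {f : Fin m → Fin n // Function.Injective f} = n.factorial := by
    have := hsum (fun _ => (1 : ℝ))
    simp only [Finset.sum_const, Finset.card_univ, smul_eq_mul, mul_one, nsmul_eq_mul] at this
    have h3 : Fintype.card (Equiv.Perm (Fin n))
        = c * Fintype.card {f : Fin m → Fin n // Function.Injective f} := by exact_mod_cast this
    rw [← h3, Fintype.card_perm, Fintype.card_fin]
  have hcardI : Fintype.card {f : Fin m → Fin n // Function.Injective f}
      = n.descFactorial m := by
    rw [Fintype.card_congr (Equiv.subtypeInjectiveEquivEmbedding (Fin m) (Fin n)),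
      Fintype.card_embedding_eq, Fintype.card_fin, Fintype.card_fin]
  have h4 : c * n.descFactorial m = n.factorial := by rw [← hcardI]; exact hcount
  have h5 := hsum F
  rw [show (∑ σ : Equiv.Perm (Fin n), F ⟨σ ∘ ι, σ.injective.comp hι⟩)
      = ∑ σ : Equiv.Perm (Fin n), F (Φ σ) from rfl, h5, nsmul_eq_mul, ← mul_assoc,
    show ((n.descFactorial m : ℝ) * c) = ((c * n.descFactorial m : ℕ) : ℝ) by push_cast; ring,
    h4]

/-- mgf of a sum of functions of disjoint blocks of independent random variables factorizes. -/
lemma UAux.mgf_block_sum {Ω α : Type*} [MeasurableSpace Ω] [MeasurableSpace α]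
    {μ : Measure Ω} [IsProbabilityMeasure μ]
    {n : ℕ} {W : Fin n → Ω → α} (hWmeas : ∀ i, Measurable (W i))
    (hWindep : iIndepFun W μ)
    {k m : ℕ} (e : Fin k → Fin m → Fin n)
    (he : ∀ j j' i i', e j i = e j' i' → j = j')
    (G : Fin k → (Fin m → α) → ℝ) (hG : ∀ j, Measurable (G j)) (c : ℝ) :
    ∫ ω, Real.exp (c * ∑ j, G j (fun i => W (e j i) ω)) ∂μ
      = ∏ j, ∫ ω, Real.exp (c * G j (fun i => W (e j i) ω)) ∂μ := by
  classical
  set Y : Fin k → Ω → ℝ := fun j ω => G j (fun i => W (e j i) ω) with hY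
  have hYmeas : ∀ j, Measurable (Y j) := fun j =>
    (hG j).comp (measurable_pi_lambda _ fun i => hWmeas (e j i))
  have hindep : ∀ (S : Finset (Fin k)) (j : Fin k), j ∉ S →
      IndepFun (Y j) (fun ω => ∑ j' ∈ S, Y j' ω) μ := by
    intro S j hj
    set S₁ : Finset (Fin n) := Finset.univ.image (e j) with hS₁
    set S₂ : Finset (Fin n) := S.biUnion (fun j' => Finset.univ.image (e j')) with hS₂
    have hdisj : Disjoint S₁ S₂ := by
      rw [Finset.disjoint_left]
      intro x hx1 hx2
      simp only [hS₁, Finset.mem_image, Finset.mem_univ, true_and] at hx1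
      simp only [hS₂, Finset.mem_biUnion, Finset.mem_image, Finset.mem_univ, true_and] at hx2
      obtain ⟨i, hi⟩ := hx1
      obtain ⟨j', hj', i', hi'⟩ := hx2
      have : j = j' := he j j' i i' (by rw [hi, hi'])
      exact hj (this ▸ hj')
    have hmem₁ : ∀ i : Fin m, e j i ∈ S₁ := fun i =>
      Finset.mem_image.2 ⟨i, Finset.mem_univ i, rfl⟩
    have hmem₂ : ∀ (j' : {x // x ∈ S}) (i : Fin m), e j'.1 i ∈ S₂ := fun j' i =>
      Finset.mem_biUnion.2 ⟨j'.1, j'.2, Finset.mem_image.2 ⟨i, Finset.mem_univ i, rfl⟩⟩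
    set φ : ((x : {x // x ∈ S₁}) → α) → ℝ :=
      fun v => G j (fun i => v ⟨e j i, hmem₁ i⟩) with hφdef
    set ψ : ((x : {x // x ∈ S₂}) → α) → ℝ :=
      fun v => ∑ j' ∈ S.attach, G j'.1 (fun i => v ⟨e j'.1 i, hmem₂ j' i⟩) with hψdef
    have hφ : Measurable φ :=
      (hG j).comp (measurable_pi_lambda _ fun i => measurable_pi_apply _)
    have hψ : Measurable ψ :=
      Finset.measurable_sum _ fun j' _ =>
        (hG j'.1).comp (measurable_pi_lambda _ fun i => measurable_pi_apply _)
    have h2 := (hWindep.indepFun_finset S₁ S₂ hdisj hWmeas).comp hφ hψ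
    have heq1 : (φ ∘ fun ω (x : {x // x ∈ S₁}) => W x ω) = Y j := rfl
    have heq2 : (ψ ∘ fun ω (x : {x // x ∈ S₂}) => W x ω) = fun ω => ∑ j' ∈ S, Y j' ω := by
      funext ω
      exact Finset.sum_attach S fun j' => G j' (fun i => W (e j' i) ω)
    rw [heq1, heq2] at h2
    exact h2
  have main : ∀ S : Finset (Fin k),
      mgf (fun ω => ∑ j ∈ S, Y j ω) μ c = ∏ j ∈ S, mgf (Y j) μ c := by
    intro S
    induction S using Finset.induction_on with
    | empty => simp [mgf]
    | @insert i S hi ih =>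
      have hsplit : (fun ω => ∑ j ∈ insert i S, Y j ω)
          = Y i + fun ω => ∑ j ∈ S, Y j ω := by
        funext ω
        simp [Finset.sum_insert hi]
      rw [hsplit, Finset.prod_insert hi, ← ih]
      exact (hindep S i hi).mgf_add
        ((hYmeas i).const_mul c).exp.aestronglyMeasurable
        (((Finset.measurable_sum S fun j _ => hYmeas j).const_mul c).exp).aestronglyMeasurable
  have := main Finset.univ
  simpa [mgf] using this

lemma UAux.one_sided {Ω α : Type*} [MeasurableSpace Ω] [MeasurableSpace α]
    (μ : Measure Ω) [IsProbabilityMeasure μ]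
    (n m : ℕ) (hm : 0 < m) (hmn : m ≤ n)
    (W : Fin n → Ω → α)
    (hWmeas : ∀ i, Measurable (W i))
    (hWindep : iIndepFun W μ)
    (g : (Fin m → α) → ℝ) (hg : Measurable g)
    (a b : ℝ) (hab : a < b)
    (hbound : ∀ v : Fin m → α, a ≤ g v ∧ g v ≤ b)
    (U : Ω → ℝ)
    (hU : U = fun ω => (1 / (n.descFactorial m : ℝ)) *
      ∑ ι : {f : Fin m → Fin n // Function.Injective f}, g (fun k => W (ι.1 k) ω))
    (t : ℝ) (ht : 0 < t) :
    μ {ω | t ≤ U ω - ∫ ω', U ω' ∂μ} ≤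
      ENNReal.ofReal (Real.exp (-2 * ((n / m : ℕ) : ℝ) * t ^ 2 / (b - a) ^ 2)) := by
  classical
  set k := n / m with hkdef
  have hk : 0 < k := Nat.div_pos hmn hm
  have hkm : k * m ≤ n := Nat.div_mul_le_self n m
  have hkR : (0:ℝ) < k := by exact_mod_cast hk
  have hba : (0:ℝ) < b - a := by linarith
  have hN0 : 0 < n.descFactorial m := Nat.pos_of_ne_zero
    (fun h => absurd (Nat.descFactorial_eq_zero_iff_lt.1 h) (not_lt.2 hmn))
  have hNR : (0:ℝ) < n.descFactorial m := by exact_mod_cast hN0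
  have hfacR : (0:ℝ) < n.factorial := by exact_mod_cast n.factorial_pos
  -- blocks
  have hidx_lt : ∀ (j : Fin k) (i : Fin m), j.1 * m + i.1 < n := by
    intro j i
    have h2 : (j.1 + 1) * m ≤ k * m := Nat.mul_le_mul_right m j.2
    have h3 : j.1 * m + i.1 < (j.1 + 1) * m := by
      have := i.2
      calc j.1 * m + i.1 < j.1 * m + m := by omega
        _ = (j.1 + 1) * m := by ring
    omega
  set idx : Fin k → Fin m → Fin n := fun j i => ⟨j.1 * m + i.1, hidx_lt j i⟩ with hidx
  have hidx_j : ∀ j j' i i', idx j i = idx j' i' → j = j' := by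
    intro j j' i i' h
    have hv : j.1 * m + i.1 = j'.1 * m + i'.1 := congrArg Fin.val h
    have hv' : i.1 + j.1 * m = i'.1 + j'.1 * m := by omega
    have e1 : (i.1 + j.1 * m) / m = i.1 / m + j.1 := Nat.add_mul_div_right _ _ hm
    have e2 : (i'.1 + j'.1 * m) / m = i'.1 / m + j'.1 := Nat.add_mul_div_right _ _ hm
    have d1 : i.1 / m = 0 := Nat.div_eq_of_lt i.2
    have d2 : i'.1 / m = 0 := Nat.div_eq_of_lt i'.2
    apply Fin.ext
    have := hv' ▸ e1
    rw [hv'] at e1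
    rw [e2] at e1
    omega
  have hidx_inj : ∀ j, Function.Injective (idx j) := by
    intro j i i' h
    have hv : j.1 * m + i.1 = j.1 * m + i'.1 := congrArg Fin.val h
    exact Fin.ext (by omega)
  -- block random variables
  set Y : Equiv.Perm (Fin n) → Fin k → Ω → ℝ :=
    fun σ j ω => g (fun i => W (σ (idx j i)) ω) with hY
  set V : Equiv.Perm (Fin n) → Ω → ℝ :=
    fun σ ω => (k:ℝ)⁻¹ * ∑ j, Y σ j ω with hV
  have hYmeas : ∀ σ j, Measurable (Y σ j) := fun σ j =>
    hg.comp (measurable_pi_lambda _ fun i => hWmeas _)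
  have hYmem : ∀ σ j ω, Y σ j ω ∈ Set.Icc a b := fun σ j ω =>
    ⟨(hbound _).1, (hbound _).2⟩
  have hVmeas : ∀ σ, Measurable (V σ) := fun σ =>
    (Finset.measurable_sum _ fun j _ => hYmeas σ j).const_mul _
  have hVmem : ∀ σ ω, V σ ω ∈ Set.Icc a b := by
    intro σ ω
    have h1 : (k:ℝ) * a ≤ ∑ j, Y σ j ω := by
      calc (k:ℝ) * a = ∑ _j : Fin k, a := by
            rw [Finset.sum_const, Finset.card_univ, Fintype.card_fin, nsmul_eq_mul]
        _ ≤ ∑ j, Y σ j ω := Finset.sum_le_sum fun j _ => (hYmem σ j ω).1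
    have h2 : ∑ j, Y σ j ω ≤ (k:ℝ) * b := by
      calc ∑ j, Y σ j ω ≤ ∑ _j : Fin k, b := Finset.sum_le_sum fun j _ => (hYmem σ j ω).2
        _ = (k:ℝ) * b := by
            rw [Finset.sum_const, Finset.card_univ, Fintype.card_fin, nsmul_eq_mul]
    constructor
    · have := mul_le_mul_of_nonneg_left h1 (inv_nonneg.2 hkR.le)
      calc a = (k:ℝ)⁻¹ * ((k:ℝ) * a) := by field_simp
        _ ≤ V σ ω := this
    · have := mul_le_mul_of_nonneg_left h2 (inv_nonneg.2 hkR.le)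
      calc V σ ω ≤ (k:ℝ)⁻¹ * ((k:ℝ) * b) := this
        _ = b := by field_simp
  have hUmeas : Measurable U := by
    rw [hU]
    exact (Finset.measurable_sum _ fun f _ =>
      hg.comp (measurable_pi_lambda _ fun i => hWmeas _)).const_mul _
  have hUmem : ∀ ω, U ω ∈ Set.Icc a b := by
    intro ω
    rw [hU]
    set N := n.descFactorial m
    have hcard : (Fintype.card {f : Fin m → Fin n // Function.Injective f}) = N := by
      rw [Fintype.card_congr (Equiv.subtypeInjectiveEquivEmbedding (Fin m) (Fin n)),
        Fintype.card_embedding_eq, Fintype.card_fin, Fintype.card_fin]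
    have h1 : (N:ℝ) * a ≤ ∑ f : {f : Fin m → Fin n // Function.Injective f},
        g (fun i => W (f.1 i) ω) := by
      calc (N:ℝ) * a = ∑ _f : {f : Fin m → Fin n // Function.Injective f}, a := by
            rw [Finset.sum_const, Finset.card_univ, hcard, nsmul_eq_mul]
        _ ≤ _ := Finset.sum_le_sum fun f _ => (hbound _).1
    have h2 : (∑ f : {f : Fin m → Fin n // Function.Injective f},
        g (fun i => W (f.1 i) ω)) ≤ (N:ℝ) * b := by
      calc _ ≤ ∑ _f : {f : Fin m → Fin n // Function.Injective f}, b :=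
            Finset.sum_le_sum fun f _ => (hbound _).2
        _ = (N:ℝ) * b := by
            rw [Finset.sum_const, Finset.card_univ, hcard, nsmul_eq_mul]
    constructor
    · have := mul_le_mul_of_nonneg_left h1 (by positivity : (0:ℝ) ≤ 1 / (N:ℝ))
      calc a = 1 / (N:ℝ) * ((N:ℝ) * a) := by field_simp
        _ ≤ _ := this
    · have := mul_le_mul_of_nonneg_left h2 (by positivity : (0:ℝ) ≤ 1 / (N:ℝ))
      calc _ ≤ 1 / (N:ℝ) * ((N:ℝ) * b) := this
        _ = b := by field_simp
  have hUint : Integrable U μ := UAux.integrable_of_bounded hUmeas.aestronglyMeasurable hUmem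
  have hVint : ∀ σ, Integrable (V σ) μ := fun σ =>
    UAux.integrable_of_bounded (hVmeas σ).aestronglyMeasurable (hVmem σ)
  have hYint : ∀ σ j, Integrable (Y σ j) μ := fun σ j =>
    UAux.integrable_of_bounded (hYmeas σ j).aestronglyMeasurable (hYmem σ j)
  -- combinatorial identity
  have hcomb : ∀ ω, ∑ σ : Equiv.Perm (Fin n), V σ ω = (n.factorial : ℝ) * U ω := by
    intro ω
    have hswap : ∑ σ : Equiv.Perm (Fin n), V σ ω
        = (k:ℝ)⁻¹ * ∑ j : Fin k, ∑ σ : Equiv.Perm (Fin n), Y σ j ω := by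
      calc ∑ σ : Equiv.Perm (Fin n), V σ ω
          = (k:ℝ)⁻¹ * ∑ σ : Equiv.Perm (Fin n), ∑ j : Fin k, Y σ j ω := by
            rw [Finset.mul_sum]
        _ = (k:ℝ)⁻¹ * ∑ j : Fin k, ∑ σ : Equiv.Perm (Fin n), Y σ j ω := by
            rw [Finset.sum_comm]
    set Sg := ∑ f : {f : Fin m → Fin n // Function.Injective f},
      g (fun i => W (f.1 i) ω) with hSg
    have hj : ∀ j : Fin k, ∑ σ : Equiv.Perm (Fin n), Y σ j ω
        = (n.factorial : ℝ) * Sg / (n.descFactorial m : ℝ) := by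
      intro j
      have := UAux.sum_perm (idx j) (hidx_inj j)
        (fun f => g (fun i => W (f.1 i) ω))
      have heq : (∑ σ : Equiv.Perm (Fin n),
          (fun f : {f : Fin m → Fin n // Function.Injective f} =>
            g (fun i => W (f.1 i) ω)) ⟨σ ∘ idx j, σ.injective.comp (hidx_inj j)⟩)
          = ∑ σ : Equiv.Perm (Fin n), Y σ j ω := rfl
      rw [heq] at this
      field_simp
      linarith [this]
    rw [hswap]
    rw [Finset.sum_congr rfl (fun j _ => hj j)]
    rw [Finset.sum_const, Finset.card_univ, Fintype.card_fin, nsmul_eq_mul, hU]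
    field_simp
    exact hSg
  -- expectation identity
  have hEford : ∑ σ : Equiv.Perm (Fin n), ∫ ω, V σ ω ∂μ
      = (n.factorial : ℝ) * ∫ ω, U ω ∂μ := by
    rw [← integral_finset_sum _ (fun σ _ => hVint σ)]
    rw [show (fun ω => ∑ σ : Equiv.Perm (Fin n), V σ ω)
      = fun ω => (n.factorial : ℝ) * U ω from funext hcomb]
    exact integral_const_mul _ _
  -- the parameter
  set s : ℝ := 4 * (k:ℝ) * t / (b - a) ^ 2 with hs_def
  have hs : 0 < s := by positivity
  set B : ℝ := s ^ 2 * (b - a) ^ 2 / (8 * (k:ℝ)) with hB_def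
  -- mgf bound for each V σ
  have hmgfV : ∀ σ : Equiv.Perm (Fin n),
      ∫ ω, Real.exp (s * (V σ ω - ∫ ω', V σ ω' ∂μ)) ∂μ ≤ Real.exp B := by
    intro σ
    set EV := ∫ ω', V σ ω' ∂μ with hEV
    have hsplit : (fun ω => Real.exp (s * (V σ ω - EV)))
        = fun ω => Real.exp (-(s*EV)) * Real.exp ((s / (k:ℝ)) * ∑ j, Y σ j ω) := by
      funext ω
      rw [← Real.exp_add]
      congr 1
      simp only [V, hV]
      field_simp
      ring
    rw [hsplit, integral_const_mul]
    have he : ∀ j j' i i', σ (idx j i) = σ (idx j' i') → j = j' := fun j j' i i' h =>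
      hidx_j j j' i i' (σ.injective h)
    have hprod := UAux.mgf_block_sum hWmeas hWindep (fun j i => σ (idx j i)) he
      (fun _ => g) (fun _ => hg) (s / (k:ℝ))
    have hprodle : (∏ j : Fin k, ∫ ω, Real.exp ((s / (k:ℝ)) * Y σ j ω) ∂μ)
        ≤ ∏ j : Fin k, Real.exp ((s / (k:ℝ)) * (∫ ω, Y σ j ω ∂μ)
            + (s / (k:ℝ)) ^ 2 * (b - a) ^ 2 / 8) := by
      apply Finset.prod_le_prod
      · intro j _
        exact integral_nonneg fun ω => (Real.exp_pos _).le
      · intro j _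
        exact UAux.mgf_le (hYmeas σ j) hab (by positivity) (hYmem σ j)
    have hEVY : ∑ j : Fin k, ∫ ω, Y σ j ω ∂μ = (k:ℝ) * EV := by
      rw [hEV]
      have : ∫ ω', V σ ω' ∂μ = (k:ℝ)⁻¹ * ∑ j, ∫ ω, Y σ j ω ∂μ := by
        simp only [V, hV]
        rw [integral_const_mul, integral_finset_sum _ (fun j _ => hYint σ j)]
      rw [this]
      field_simp
    calc Real.exp (-(s*EV)) * ∫ ω, Real.exp ((s / (k:ℝ)) * ∑ j, Y σ j ω) ∂μ
        = Real.exp (-(s*EV)) * ∏ j : Fin k, ∫ ω, Real.exp ((s / (k:ℝ)) * Y σ j ω) ∂μ := by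
          rw [hprod]
      _ ≤ Real.exp (-(s*EV)) * ∏ j : Fin k, Real.exp ((s / (k:ℝ)) * (∫ ω, Y σ j ω ∂μ)
            + (s / (k:ℝ)) ^ 2 * (b - a) ^ 2 / 8) :=
          mul_le_mul_of_nonneg_left hprodle (Real.exp_pos _).le
      _ = Real.exp (-(s*EV) + ∑ j : Fin k, ((s / (k:ℝ)) * (∫ ω, Y σ j ω ∂μ)
            + (s / (k:ℝ)) ^ 2 * (b - a) ^ 2 / 8)) := by
          rw [← Real.exp_sum, ← Real.exp_add]
      _ = Real.exp B := by
          congr 1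
          rw [Finset.sum_add_distrib, ← Finset.mul_sum, hEVY, Finset.sum_const,
            Finset.card_univ, Fintype.card_fin, nsmul_eq_mul, hB_def]
          field_simp
          ring
  -- Jensen step
  set EU := ∫ ω', U ω' ∂μ with hEU
  set w : ℝ := ((n.factorial : ℝ))⁻¹ with hw
  have hw0 : 0 ≤ w := by positivity
  have hWone : ∑ _σ : Equiv.Perm (Fin n), w = 1 := by
    rw [Finset.sum_const, Finset.card_univ, Fintype.card_perm, Fintype.card_fin, nsmul_eq_mul, hw]
    field_simp
  have hEVmem : ∀ σ, (∫ ω', V σ ω' ∂μ) ∈ Set.Icc a b := by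
    intro σ
    constructor
    · simpa using integral_mono (integrable_const a) (hVint σ) (fun ω => (hVmem σ ω).1)
    · simpa using integral_mono (hVint σ) (integrable_const b) (fun ω => (hVmem σ ω).2)
  have hEUmem : EU ∈ Set.Icc a b := by
    constructor
    · simpa [hEU] using integral_mono (integrable_const a) hUint (fun ω => (hUmem ω).1)
    · simpa [hEU] using integral_mono hUint (integrable_const b) (fun ω => (hUmem ω).2)
  have hexpVint : ∀ σ, Integrable (fun ω => Real.exp (s * (V σ ω - ∫ ω', V σ ω' ∂μ))) μ := by
    intro σ
    refine UAux.integrable_of_bounded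
      ((((hVmeas σ).sub_const _).const_mul s).exp).aestronglyMeasurable
      (a := 0) (b := Real.exp (s * (b - a))) fun ω => ⟨(Real.exp_pos _).le, ?_⟩
    apply Real.exp_le_exp.2
    have h1 := (hVmem σ ω).2
    have h2 := (hEVmem σ).1
    have : V σ ω - ∫ ω', V σ ω' ∂μ ≤ b - a := by linarith
    exact mul_le_mul_of_nonneg_left this hs.le
  have hLint : Integrable (fun ω => Real.exp (s * (U ω - EU))) μ := by
    refine UAux.integrable_of_bounded
      (((hUmeas.sub_const _).const_mul s).exp).aestronglyMeasurable
      (a := 0) (b := Real.exp (s * (b - a))) fun ω => ⟨(Real.exp_pos _).le, ?_⟩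
    apply Real.exp_le_exp.2
    have h1 := (hUmem ω).2
    have h2 := hEUmem.1
    have : U ω - EU ≤ b - a := by linarith
    exact mul_le_mul_of_nonneg_left this hs.le
  have hpt : ∀ ω, Real.exp (s * (U ω - EU)) ≤
      ∑ σ : Equiv.Perm (Fin n), w * Real.exp (s * (V σ ω - ∫ ω', V σ ω' ∂μ)) := by
    intro ω
    have harg : ∑ σ : Equiv.Perm (Fin n), w • (s * (V σ ω - ∫ ω', V σ ω' ∂μ))
        = s * (U ω - EU) := by
      simp only [smul_eq_mul]
      calc ∑ σ : Equiv.Perm (Fin n), w * (s * (V σ ω - ∫ ω', V σ ω' ∂μ))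
          = ∑ σ : Equiv.Perm (Fin n), (w * s * V σ ω - w * s * (∫ ω', V σ ω' ∂μ)) :=
            Finset.sum_congr rfl (fun σ _ => by ring)
        _ = w * s * (∑ σ : Equiv.Perm (Fin n), V σ ω)
            - w * s * (∑ σ : Equiv.Perm (Fin n), ∫ ω', V σ ω' ∂μ) := by
            rw [Finset.sum_sub_distrib]
            congr 1 <;> rw [Finset.mul_sum]
        _ = s * (U ω - EU) := by
            rw [hcomb ω, hEford]
            have hfne : (n.factorial : ℝ) ≠ 0 := hfacR.ne'
            field_simp [hw]
            try ring
            rw [hw, inv_mul_cancel₀ hfne, one_mul, one_mul]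
    have hj := convexOn_exp.map_sum_le (t := (Finset.univ : Finset (Equiv.Perm (Fin n))))
      (w := fun _ => w) (p := fun σ => s * (V σ ω - ∫ ω', V σ ω' ∂μ))
      (fun _ _ => hw0) hWone (fun _ _ => Set.mem_univ _)
    rw [harg] at hj
    simpa only [smul_eq_mul] using hj
  have h6 : ∫ ω, Real.exp (s * (U ω - EU)) ∂μ ≤ Real.exp B := by
    calc ∫ ω, Real.exp (s * (U ω - EU)) ∂μ
        ≤ ∫ ω, (∑ σ : Equiv.Perm (Fin n), w * Real.exp (s * (V σ ω - ∫ ω', V σ ω' ∂μ))) ∂μ :=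
          integral_mono hLint
            (integrable_finset_sum _ fun σ _ => (hexpVint σ).const_mul w) hpt
      _ = ∑ σ : Equiv.Perm (Fin n), w * ∫ ω, Real.exp (s * (V σ ω - ∫ ω', V σ ω' ∂μ)) ∂μ := by
          rw [integral_finset_sum _ (fun σ _ => (hexpVint σ).const_mul w)]
          exact Finset.sum_congr rfl fun σ _ => integral_const_mul w _
      _ ≤ ∑ _σ : Equiv.Perm (Fin n), w * Real.exp B :=
          Finset.sum_le_sum fun σ _ => mul_le_mul_of_nonneg_left (hmgfV σ) hw0
      _ = Real.exp B := by
          rw [← Finset.sum_mul, hWone, one_mul]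
  -- Chernoff
  have hch := measure_ge_le_exp_mul_mgf (μ := μ) (X := fun ω => U ω - EU) (t := s) t hs.le hLint
  have hmgf_eq : mgf (fun ω => U ω - EU) μ s = ∫ ω, Real.exp (s * (U ω - EU)) ∂μ := rfl
  have hexp_eq : -s * t + B = -2 * (k:ℝ) * t ^ 2 / (b - a) ^ 2 := by
    rw [hB_def, hs_def]
    field_simp
    ring
  have htoReal : (μ {ω | t ≤ U ω - EU}).toReal
      ≤ Real.exp (-2 * (k:ℝ) * t ^ 2 / (b - a) ^ 2) := by
    calc (μ {ω | t ≤ U ω - EU}).toReal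
        ≤ Real.exp (-s * t) * mgf (fun ω => U ω - EU) μ s := hch
      _ ≤ Real.exp (-s * t) * Real.exp B := by
          rw [hmgf_eq]
          exact mul_le_mul_of_nonneg_left h6 (Real.exp_pos _).le
      _ = Real.exp (-s * t + B) := (Real.exp_add _ _).symm
      _ = Real.exp (-2 * (k:ℝ) * t ^ 2 / (b - a) ^ 2) := by rw [hexp_eq]
  calc μ {ω | t ≤ U ω - EU}
      = ENNReal.ofReal ((μ {ω | t ≤ U ω - EU}).toReal) :=
        (ENNReal.ofReal_toReal (measure_ne_top μ _)).symm
    _ ≤ ENNReal.ofReal (Real.exp (-2 * (k:ℝ) * t ^ 2 / (b - a) ^ 2)) :=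
        ENNReal.ofReal_le_ofReal htoReal


/-- Hoeffding's inequality for one-sample U-statistics: if
`U = (1/n^(m)) Σ g(W_{i₁},…,W_{i_m})` with the sum over all `m`-tuples of
distinct indices among `n` independent random variables `W_i`, and
`a ≤ g ≤ b` pointwise, then for any `t > 0` and `m ≤ n`,
`Pr(|U − E[U]| > t) ≤ 2 exp(−2⌊n/m⌋t²/(b−a)²)`. -/
theorem stmt1 {Ω α : Type*} [MeasurableSpace Ω] [MeasurableSpace α]
    (μ : Measure Ω) [IsProbabilityMeasure μ]
    (n m : ℕ) (hm : 0 < m) (hmn : m ≤ n)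
    (W : Fin n → Ω → α)
    (hWmeas : ∀ i, Measurable (W i))
    (hWindep : iIndepFun W μ)
    (g : (Fin m → α) → ℝ) (hg : Measurable g)
    (a b : ℝ) (hab : a < b)
    (hbound : ∀ v : Fin m → α, a ≤ g v ∧ g v ≤ b)
    (U : Ω → ℝ)
    (hU : U = fun ω => (1 / (n.descFactorial m : ℝ)) *
      ∑ ι : {f : Fin m → Fin n // Function.Injective f}, g (fun k => W (ι.1 k) ω))
    (t : ℝ) (ht : 0 < t) :
    μ {ω | t < |U ω - ∫ ω', U ω' ∂μ|} ≤
      ENNReal.ofReal (2 * Real.exp (-2 * (n / m : ℕ) * t ^ 2 / (b - a) ^ 2)) := by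
  have h1 := UAux.one_sided μ n m hm hmn W hWmeas hWindep g hg a b hab hbound U hU t ht
  have hU' : (fun ω => -U ω) = fun ω => (1 / (n.descFactorial m : ℝ)) *
      ∑ ι : {f : Fin m → Fin n // Function.Injective f},
        (fun v => -g v) (fun k => W (ι.1 k) ω) := by
    funext ω
    rw [hU]
    rw [Finset.sum_neg_distrib]
    ring
  have h2 := UAux.one_sided μ n m hm hmn W hWmeas hWindep (fun v => -g v) hg.neg
    (-b) (-a) (by linarith) (fun v => ⟨by simpa using neg_le_neg (hbound v).2, by simpa using neg_le_neg (hbound v).1⟩)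
    (fun ω => -U ω) hU' t ht
  rw [show ((-a : ℝ) - -b) = b - a from by ring] at h2
  have hsub : {ω | t < |U ω - ∫ ω', U ω' ∂μ|} ⊆
      {ω | t ≤ U ω - ∫ ω', U ω' ∂μ} ∪ {ω | t ≤ -U ω - ∫ ω', -U ω' ∂μ} := by
    intro ω hω
    have habs : t < |U ω - ∫ ω', U ω' ∂μ| := hω
    have hneg : ∫ ω', -U ω' ∂μ = -∫ ω', U ω' ∂μ := integral_neg U
    rcases abs_cases (U ω - ∫ ω', U ω' ∂μ) with ⟨h, _⟩ | ⟨h, _⟩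
    · left
      show t ≤ U ω - ∫ ω', U ω' ∂μ
      linarith [h ▸ habs]
    · right
      show t ≤ -U ω - ∫ ω', -U ω' ∂μ
      rw [hneg]
      have := h ▸ habs
      linarith
  calc μ {ω | t < |U ω - ∫ ω', U ω' ∂μ|}
      ≤ μ ({ω | t ≤ U ω - ∫ ω', U ω' ∂μ} ∪ {ω | t ≤ -U ω - ∫ ω', -U ω' ∂μ}) :=
        measure_mono hsub
    _ ≤ μ {ω | t ≤ U ω - ∫ ω', U ω' ∂μ} + μ {ω | t ≤ -U ω - ∫ ω', -U ω' ∂μ} :=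
        measure_union_le _ _
    _ ≤ ENNReal.ofReal (Real.exp (-2 * ((n / m : ℕ) : ℝ) * t ^ 2 / (b - a) ^ 2))
        + ENNReal.ofReal (Real.exp (-2 * ((n / m : ℕ) : ℝ) * t ^ 2 / (b - a) ^ 2)) :=
        add_le_add h1 h2
    _ = ENNReal.ofReal (2 * Real.exp (-2 * (n / m : ℕ) * t ^ 2 / (b - a) ^ 2)) := by
        rw [← ENNReal.ofReal_add (Real.exp_pos _).le (Real.exp_pos _).le]
        congr 1
        ring
end

section
/- Let τ̂ be the sample Kendall's tau from n i.i.d. observations of a continuous pair (X_j, X_{j'}). Suppose log p = C₃ n^ξ with ξ ∈ (0, 1−2κ), and min_{(j,j')∈E}|ρ_{jj'}| ≥ C₁ n^{−κ}. Then with threshold γ_n = (2/3)C₁ n^{−κ}, Pr(E ⊆ Ê_{γ_n}) ≥ 1 − 2p² exp(−(2⌊n/2⌋/(9π²)) C₁² n^{−2κ}). -/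
open MeasureTheory ProbabilityTheory Real
open scoped ENNReal


lemma measurable_realSign : Measurable Real.sign := by
  unfold Real.sign
  exact Measurable.ite measurableSet_Iio measurable_const
    (Measurable.ite measurableSet_Ioi measurable_const measurable_const)

lemma abs_realSign_le (r : ℝ) : |Real.sign r| ≤ 1 := by
  rcases Real.sign_apply_eq r with h | h | h <;> rw [h] <;> norm_num

lemma hoeffding_core {τ : ℝ} (h1 : |τ| ≤ 1) (s : ℝ) :
    Real.cosh s + τ * Real.sinh s ≤ Real.exp (s * τ + s ^ 2 / 2) := by
  have habs : ∀ x : ℝ, |Real.sinh x| < Real.cosh x := fun x => by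
    have h := Real.cosh_sq_sub_sinh_sq x
    have hc := Real.cosh_pos x
    have : Real.sinh x ^ 2 < Real.cosh x ^ 2 := by nlinarith
    exact abs_lt.2 ⟨by nlinarith [abs_nonneg (Real.sinh x), neg_abs_le (Real.sinh x)], by
      nlinarith [le_abs_self (Real.sinh x)]⟩
  set G : ℝ → ℝ := fun x => Real.cosh x + τ * Real.sinh x with hGdef
  have hGpos : ∀ x, 0 < G x := by
    intro x
    have h2 : |τ * Real.sinh x| ≤ |Real.sinh x| := by
      rw [abs_mul]; nlinarith [abs_nonneg (Real.sinh x)]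
    have := habs x
    have := neg_abs_le (τ * Real.sinh x)
    simp only [hGdef]
    nlinarith
  have hG' : ∀ x, HasDerivAt G (Real.sinh x + τ * Real.cosh x) x := by
    intro x
    exact (Real.hasDerivAt_cosh x).add ((Real.hasDerivAt_sinh x).const_mul τ)
  have hGsq : ∀ x, 1 - τ ^ 2 ≤ (G x) ^ 2 := by
    intro x
    have h := Real.cosh_sq_sub_sinh_sq x
    simp only [hGdef]
    nlinarith [sq_nonneg (Real.sinh x + τ * Real.cosh x)]
  -- D = derivative of F
  set D : ℝ → ℝ := fun x => τ + x - (Real.sinh x + τ * Real.cosh x) / G x with hDdef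
  have hD' : ∀ x, HasDerivAt D (1 - (1 - τ ^ 2) / (G x) ^ 2) x := by
    intro x
    have hdiv : HasDerivAt (fun y => (Real.sinh y + τ * Real.cosh y) / G y)
        (((Real.cosh x + τ * Real.sinh x) * G x - (Real.sinh x + τ * Real.cosh x) *
          (Real.sinh x + τ * Real.cosh x)) / (G x) ^ 2) x := by
      exact HasDerivAt.div ((Real.hasDerivAt_sinh x).add ((Real.hasDerivAt_cosh x).const_mul τ))
        (hG' x) (hGpos x).ne'
    have heq : ((Real.cosh x + τ * Real.sinh x) * G x - (Real.sinh x + τ * Real.cosh x) *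
          (Real.sinh x + τ * Real.cosh x)) / (G x) ^ 2 = (1 - τ ^ 2) / (G x) ^ 2 := by
      congr 1
      have h := Real.cosh_sq_sub_sinh_sq x
      simp only [hGdef]
      nlinarith
    rw [heq] at hdiv
    have : HasDerivAt (fun x => τ + x) 1 x := (hasDerivAt_id x).const_add τ
    exact this.sub hdiv
  have hDderivnn : ∀ x, 0 ≤ 1 - (1 - τ ^ 2) / (G x) ^ 2 := by
    intro x
    have h2 : (0:ℝ) < (G x) ^ 2 := pow_pos (hGpos x) 2
    have := hGsq x
    rw [sub_nonneg, div_le_one h2]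
    exact this
  have hDmono : Monotone D := by
    apply monotone_of_deriv_nonneg
    · exact fun x => (hD' x).differentiableAt
    · intro x; rw [(hD' x).deriv]; exact hDderivnn x
  have hD0 : D 0 = 0 := by
    simp [hDdef, hGdef, Real.cosh_zero, Real.sinh_zero]
  -- F
  set F : ℝ → ℝ := fun x => x * τ + x ^ 2 / 2 - Real.log (G x) with hFdef
  have hF' : ∀ x, HasDerivAt F (D x) x := by
    intro x
    have hlog : HasDerivAt (fun y => Real.log (G y))
        ((Real.sinh x + τ * Real.cosh x) / G x) x := by
      have := (hG' x).log (hGpos x).ne'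
      exact this
    have h1' : HasDerivAt (fun y : ℝ => y * τ + y ^ 2 / 2) (τ + x) x := by
      have ha : HasDerivAt (fun y : ℝ => y * τ) τ x := by
        simpa using (hasDerivAt_id x).mul_const τ
      have hb : HasDerivAt (fun y : ℝ => y ^ 2 / 2) x x := by
        have := (hasDerivAt_pow 2 x).div_const 2
        simpa using this
      exact ha.add hb
    exact h1'.sub hlog
  have hF0 : F 0 = 0 := by
    simp [hFdef, hGdef, Real.cosh_zero, Real.sinh_zero]
  have hFnonneg : ∀ x, 0 ≤ F x := by
    intro x
    rcases le_total 0 x with hx | hx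
    · have hmono : MonotoneOn F (Set.Ici 0) := by
        apply monotoneOn_of_deriv_nonneg (convex_Ici 0)
        · exact fun y _ => (hF' y).differentiableAt.continuousAt.continuousWithinAt
        · exact fun y _ => ((hF' y).differentiableAt).differentiableWithinAt
        · intro y hy
          rw [(hF' y).deriv]
          rw [interior_Ici] at hy
          calc (0:ℝ) = D 0 := hD0.symm
          _ ≤ D y := hDmono (le_of_lt hy)
      have := hmono (Set.mem_Ici.2 le_rfl) (Set.mem_Ici.2 hx) hx
      rwa [hF0] at this
    · have hmono : AntitoneOn F (Set.Iic 0) := by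
        apply antitoneOn_of_deriv_nonpos (convex_Iic 0)
        · exact fun y _ => (hF' y).differentiableAt.continuousAt.continuousWithinAt
        · exact fun y _ => ((hF' y).differentiableAt).differentiableWithinAt
        · intro y hy
          rw [(hF' y).deriv]
          rw [interior_Iic] at hy
          calc D y ≤ D 0 := hDmono (le_of_lt hy)
          _ = 0 := hD0
      have := hmono (Set.mem_Iic.2 hx) (Set.mem_Iic.2 le_rfl) hx
      rwa [hF0] at this
  have := hFnonneg s
  have hlog : Real.log (G s) ≤ s * τ + s ^ 2 / 2 := by
    simp only [hFdef] at this; linarith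
  calc G s ≤ Real.exp (Real.log (G s)) := (Real.exp_log (hGpos s)).ge
  _ ≤ Real.exp (s * τ + s ^ 2 / 2) := Real.exp_le_exp.2 hlog

lemma exp_le_cosh_add {z : ℝ} (hz : |z| ≤ 1) (s : ℝ) :
    Real.exp (s * z) ≤ Real.cosh s + z * Real.sinh s := by
  have h1 : (0:ℝ) ≤ (1 + z) / 2 := by
    rw [abs_le] at hz; linarith [hz.1]
  have h2 : (0:ℝ) ≤ (1 - z) / 2 := by
    rw [abs_le] at hz; linarith [hz.2]
  have h3 : (1 + z) / 2 + (1 - z) / 2 = 1 := by ring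
  have := convexOn_exp.2 (Set.mem_univ s) (Set.mem_univ (-s)) h1 h2 h3
  simp only [smul_eq_mul] at this
  have harg : (1 + z) / 2 * s + (1 - z) / 2 * (-s) = s * z := by ring
  rw [harg] at this
  calc Real.exp (s * z) ≤ (1 + z) / 2 * Real.exp s + (1 - z) / 2 * Real.exp (-s) := this
  _ = Real.cosh s + z * Real.sinh s := by
      rw [Real.cosh_eq, Real.sinh_eq]; ring

section Aux

variable {Ω : Type*} [MeasurableSpace Ω] {μ : Measure Ω} [IsProbabilityMeasure μ]

lemma integrable_of_bound (f : Ω → ℝ) (hf : Measurable f) (C : ℝ) (hC : ∀ ω, |f ω| ≤ C) :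
    Integrable f μ :=
  (integrable_const C).mono' hf.aestronglyMeasurable (ae_of_all _ hC)

lemma mgf_single (Z : Ω → ℝ) (hZ : Measurable Z) (hb : ∀ ω, |Z ω| ≤ 1) (u : ℝ) :
    ∫ ω, Real.exp (u * (Z ω - ∫ ω', Z ω' ∂μ)) ∂μ ≤ Real.exp (u ^ 2 / 2) := by
  set τ : ℝ := ∫ ω', Z ω' ∂μ with hτdef
  have hτ1 : |τ| ≤ 1 := by
    have := norm_integral_le_of_norm_le_const (μ := μ) (C := 1) (f := Z) (ae_of_all _ (by
      intro ω; rw [Real.norm_eq_abs]; exact hb ω))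
    simpa [Real.norm_eq_abs] using this
  have hZint : Integrable Z μ := integrable_of_bound Z hZ 1 hb
  have hexpint : Integrable (fun ω => Real.exp (u * Z ω)) μ := by
    apply integrable_of_bound _ (hZ.const_mul u).exp (Real.exp |u|)
    intro ω
    rw [abs_of_pos (Real.exp_pos _), Real.exp_le_exp]
    calc u * Z ω ≤ |u * Z ω| := le_abs_self _
    _ = |u| * |Z ω| := abs_mul u _
    _ ≤ |u| * 1 := by nlinarith [abs_nonneg u, hb ω]
    _ = |u| := mul_one _
  have hmono : ∫ ω, Real.exp (u * Z ω) ∂μ ≤ Real.cosh u + τ * Real.sinh u := by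
    have h2 : Integrable (fun ω => Real.cosh u + Z ω * Real.sinh u) μ :=
      (integrable_const _).add (hZint.mul_const _)
    calc ∫ ω, Real.exp (u * Z ω) ∂μ ≤ ∫ ω, (Real.cosh u + Z ω * Real.sinh u) ∂μ :=
      integral_mono hexpint h2 (fun ω => exp_le_cosh_add (hb ω) u)
    _ = Real.cosh u + τ * Real.sinh u := by
        rw [integral_add (integrable_const _) (hZint.mul_const _), integral_const,
          integral_mul_const]
        simp [hτdef]
  have hsplit : ∀ ω, Real.exp (u * (Z ω - τ)) = Real.exp (u * Z ω) * Real.exp (-(u * τ)) := by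
    intro ω; rw [← Real.exp_add]; ring_nf
  calc ∫ ω, Real.exp (u * (Z ω - τ)) ∂μ
      = (∫ ω, Real.exp (u * Z ω) ∂μ) * Real.exp (-(u * τ)) := by
        simp_rw [hsplit]; rw [integral_mul_const]
  _ ≤ (Real.cosh u + τ * Real.sinh u) * Real.exp (-(u * τ)) := by
      apply mul_le_mul_of_nonneg_right hmono (Real.exp_pos _).le
  _ ≤ Real.exp (u * τ + u ^ 2 / 2) * Real.exp (-(u * τ)) := by
      apply mul_le_mul_of_nonneg_right (hoeffding_core hτ1 u) (Real.exp_pos _).le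
  _ = Real.exp (u ^ 2 / 2) := by rw [← Real.exp_add]; ring_nf

lemma mgf_sum_le {M : ℕ} (Z : Fin M → Ω → ℝ) (hmeas : ∀ i, Measurable (Z i))
    (hb : ∀ i ω, |Z i ω| ≤ 1) (τ0 : ℝ) (hmean : ∀ i, ∫ ω, Z i ω ∂μ = τ0)
    (hind : ∀ (s : Finset (Fin M)) k, k ∉ s → IndepFun (∑ i ∈ s, Z i) (Z k) μ) (u : ℝ) :
    ∫ ω, Real.exp (u * ∑ i, (Z i ω - τ0)) ∂μ ≤ Real.exp (M * u ^ 2 / 2) := by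
  classical
  set Y : Fin M → Ω → ℝ := fun i ω => Z i ω - τ0 with hYdef
  have hYmeas : ∀ i, Measurable (Y i) := fun i => (hmeas i).sub_const τ0
  have hsum : ∀ (s : Finset (Fin M)) ω, (∑ i ∈ s, Y i) ω = (∑ i ∈ s, Z i) ω - s.card * τ0 := by
    intro s ω
    simp only [Finset.sum_apply, hYdef, Finset.sum_sub_distrib]
    simp [mul_comm]
  have hindY : ∀ (s : Finset (Fin M)) k, k ∉ s → IndepFun (∑ i ∈ s, Y i) (Y k) μ := by
    intro s k hk
    have heq1 : (∑ i ∈ s, Y i) = (fun x : ℝ => x - s.card * τ0) ∘ (∑ i ∈ s, Z i) :=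
      funext fun ω => by simp [hsum s ω, Function.comp]
    have heq2 : Y k = (fun x : ℝ => x - τ0) ∘ (Z k) := rfl
    rw [heq1, heq2]
    exact (hind s k hk).comp (measurable_id.sub_const _) (measurable_id.sub_const _)
  have key : ∀ s : Finset (Fin M), mgf (∑ i ∈ s, Y i) μ u = ∏ i ∈ s, mgf (Y i) μ u := by
    intro s
    induction s using Finset.induction_on with
    | empty => simp [mgf_zero_fun]
    | @insert k s hk ih =>
      rw [Finset.sum_insert hk, Finset.prod_insert hk, ← ih]
      have hsm : AEStronglyMeasurable (∑ i ∈ s, Y i) μ := by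
        have := (Finset.measurable_sum s (fun i (_ : i ∈ s) => hYmeas i)).aestronglyMeasurable (μ := μ)
        convert this using 1
        funext ω; simp
      exact (hindY s k hk).symm.mgf_add' (hYmeas k).aestronglyMeasurable hsm
  have hsingle : ∀ i, mgf (Y i) μ u ≤ Real.exp (u ^ 2 / 2) := by
    intro i
    have := mgf_single (μ := μ) (Z i) (hmeas i) (hb i) u
    rw [hmean i] at this
    simpa [mgf, hYdef] using this
  have hnn : ∀ i, 0 ≤ mgf (Y i) μ u := fun i => mgf_nonneg
  calc ∫ ω, Real.exp (u * ∑ i, (Z i ω - τ0)) ∂μ = mgf (∑ i, Y i) μ u := by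
        unfold mgf
        congr 1
        funext ω
        simp [hYdef]
  _ = ∏ i, mgf (Y i) μ u := key Finset.univ
  _ ≤ ∏ _i : Fin M, Real.exp (u ^ 2 / 2) :=
      Finset.prod_le_prod (fun i _ => hnn i) (fun i _ => hsingle i)
  _ = Real.exp (M * u ^ 2 / 2) := by
      rw [Finset.prod_const, ← Real.exp_nat_mul]
      congr 1; simp; ring

lemma tail_bound (W : Ω → ℝ) (hW : Measurable W) (CW : ℝ) (hWb : ∀ ω, |W ω| ≤ CW)
    (M : ℝ) (hM : 0 < M)
    (hmgf : ∀ u : ℝ, ∫ ω, Real.exp (u * W ω) ∂μ ≤ Real.exp (u ^ 2 / (2 * M)))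
    (t : ℝ) (ht : 0 < t) :
    μ {ω | t ≤ |W ω|} ≤ ENNReal.ofReal (2 * Real.exp (-(M * t ^ 2 / 2))) := by
  have hint : ∀ (s : ℝ) (V : Ω → ℝ), Measurable V → (∀ ω, |V ω| ≤ CW) →
      Integrable (fun ω => Real.exp (s * V ω)) μ := by
    intro s V hV hVb
    apply integrable_of_bound _ (hV.const_mul s).exp (Real.exp (|s| * CW))
    intro ω
    rw [abs_of_pos (Real.exp_pos _), Real.exp_le_exp]
    calc s * V ω ≤ |s * V ω| := le_abs_self _
    _ = |s| * |V ω| := abs_mul s _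
    _ ≤ |s| * CW := mul_le_mul_of_nonneg_left (hVb ω) (abs_nonneg s)
  have hone : ∀ (V : Ω → ℝ), Measurable V → (∀ ω, |V ω| ≤ CW) →
      (∀ u : ℝ, ∫ ω, Real.exp (u * V ω) ∂μ ≤ Real.exp (u ^ 2 / (2 * M))) →
      μ {ω | t ≤ V ω} ≤ ENNReal.ofReal (Real.exp (-(M * t ^ 2 / 2))) := by
    intro V hV hVb hVmgf
    have hchern := measure_ge_le_exp_mul_mgf (μ := μ) (X := V) (ε := t) (t := M * t)
      (by positivity) (hint _ _ hV hVb)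
    have hmgfV : mgf V μ (M * t) ≤ Real.exp ((M * t) ^ 2 / (2 * M)) := hVmgf (M * t)
    have h2 : Real.exp (-(M * t) * t) * mgf V μ (M * t) ≤ Real.exp (-(M * t ^ 2 / 2)) := by
      calc Real.exp (-(M * t) * t) * mgf V μ (M * t)
          ≤ Real.exp (-(M * t) * t) * Real.exp ((M * t) ^ 2 / (2 * M)) :=
            mul_le_mul_of_nonneg_left hmgfV (Real.exp_pos _).le
      _ = Real.exp (-(M * t) * t + (M * t) ^ 2 / (2 * M)) := (Real.exp_add _ _).symm
      _ = Real.exp (-(M * t ^ 2 / 2)) := by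
          congr 1; field_simp; ring
    rw [ENNReal.le_ofReal_iff_toReal_le (measure_ne_top μ _) (Real.exp_pos _).le]
    exact (hchern.trans h2)
  have habs : {ω | t ≤ |W ω|} ⊆ {ω | t ≤ W ω} ∪ {ω | t ≤ -W ω} := by
    intro ω hω
    simp only [Set.mem_setOf_eq] at hω ⊢
    rcases abs_cases (W ω) with ⟨h1, _⟩ | ⟨h1, _⟩
    · left; simpa [h1] using hω
    · right; simp only [Set.mem_setOf_eq]; rw [h1] at hω; exact hω
  calc μ {ω | t ≤ |W ω|} ≤ μ ({ω | t ≤ W ω} ∪ {ω | t ≤ -W ω}) := measure_mono habs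
  _ ≤ μ {ω | t ≤ W ω} + μ {ω | t ≤ -W ω} := measure_union_le _ _
  _ ≤ ENNReal.ofReal (Real.exp (-(M * t ^ 2 / 2))) + ENNReal.ofReal (Real.exp (-(M * t ^ 2 / 2))) := by
      gcongr
      · exact hone W hW hWb hmgf
      · apply hone (-W) hW.neg (fun ω => by simpa using hWb ω)
        intro u
        have := hmgf (-u)
        simpa [neg_mul, mul_neg] using this
  _ = ENNReal.ofReal (2 * Real.exp (-(M * t ^ 2 / 2))) := by
      rw [← ENNReal.ofReal_add (Real.exp_pos _).le (Real.exp_pos _).le]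
      congr 1; ring


variable {Ω : Type*} [MeasurableSpace Ω] {μ : Measure Ω} [IsProbabilityMeasure μ]

/-- A permutation sending `u ↦ a`, `v ↦ b` for distinct pairs. -/
lemma exists_perm_pair {n : ℕ} {a b u v : Fin n} (hab : a ≠ b) (huv : u ≠ v) :
    ∃ f : Equiv.Perm (Fin n), f u = a ∧ f v = b := by
  classical
  set v₁ := Equiv.swap u a v with hv₁
  refine ⟨(Equiv.swap v₁ b) * (Equiv.swap u a), ?_, ?_⟩
  · have h1 : Equiv.swap u a u = a := Equiv.swap_apply_left u a
    have hv₁a : v₁ ≠ a := by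
      rw [hv₁]
      intro h
      exact huv ((Equiv.swap u a).injective (by rw [h, h1]))
    have hab' : a ≠ b := hab
    simp only [Equiv.Perm.mul_apply, h1]
    exact Equiv.swap_apply_of_ne_of_ne (Ne.symm hv₁a) hab'
  · simp only [Equiv.Perm.mul_apply, ← hv₁]
    exact Equiv.swap_apply_left v₁ b

set_option maxHeartbeats 2000000 in
lemma pair_tail_bound {p n : ℕ} (hn : 2 ≤ n)
    (X : Fin n → Ω → (Fin p → ℝ))
    (hXmeas : ∀ i, Measurable (X i))
    (hXindep : iIndepFun X μ)
    (hXident : ∀ i i', IdentDistrib (X i) (X i') μ μ)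
    (g : (Fin p → ℝ) → (Fin p → ℝ) → ℝ)
    (hgmeas : Measurable (fun z : (Fin p → ℝ) × (Fin p → ℝ) => g z.1 z.2))
    (hgb : ∀ x y, |g x y| ≤ 1) (hgsymm : ∀ x y, g x y = g y x)
    (h0n : 0 < n) (h1n : 1 < n)
    (τ0 : ℝ) (hτ0 : τ0 = ∫ ω, g (X ⟨0, h0n⟩ ω) (X ⟨1, h1n⟩ ω) ∂μ)
    (t : ℝ) (ht : 0 < t) :
    μ {ω | t ≤ |(2 / (n * (n - 1) : ℝ)) *
        (∑ q ∈ Finset.univ.filter (fun q : Fin n × Fin n => q.1 < q.2), g (X q.1 ω) (X q.2 ω))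
        - τ0|} ≤ ENNReal.ofReal (2 * Real.exp (-((n / 2 : ℕ) * t ^ 2 / 2))) := by
  classical
  set m : ℕ := n / 2 with hmdef
  have hm0 : 0 < m := Nat.div_pos hn (by norm_num)
  have hm2 : 2 * m ≤ n := by omega
  set i0 : Fin n := ⟨0, by omega⟩ with hi0
  set i1 : Fin n := ⟨1, by omega⟩ with hi1
  set a : Fin m → Fin n := fun i => ⟨2 * i.1, by have := i.isLt; omega⟩ with hadef
  set b : Fin m → Fin n := fun i => ⟨2 * i.1 + 1, by have := i.isLt; omega⟩ with hbdef
  set Z : Equiv.Perm (Fin n) → Fin m → Ω → ℝ :=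
    fun σ i ω => g (X (σ (a i)) ω) (X (σ (b i)) ω) with hZdef
  have hgmeas2 : ∀ (x y : Fin n), Measurable (fun ω => g (X x ω) (X y ω)) := by
    intro x y
    exact hgmeas.comp ((hXmeas x).prodMk (hXmeas y))
  have hZmeas : ∀ σ i, Measurable (Z σ i) := fun σ i => hgmeas2 _ _
  have hZb : ∀ σ i ω, |Z σ i ω| ≤ 1 := fun σ i ω => hgb _ _
  -- identically distributed pairs
  have hpairID : ∀ (x y : Fin n), x ≠ y →
      IdentDistrib (fun ω => (X x ω, X y ω)) (fun ω => (X i0 ω, X i1 ω)) μ μ := by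
    intro x y hxy
    have h01 : i0 ≠ i1 := by simp [hi0, hi1, Fin.ext_iff]
    refine ⟨((hXmeas x).prodMk (hXmeas y)).aemeasurable,
      ((hXmeas i0).prodMk (hXmeas i1)).aemeasurable, ?_⟩
    rw [(indepFun_iff_map_prod_eq_prod_map_map (hXmeas x).aemeasurable
        (hXmeas y).aemeasurable).1 (hXindep.indepFun hxy),
      (indepFun_iff_map_prod_eq_prod_map_map (hXmeas i0).aemeasurable
        (hXmeas i1).aemeasurable).1 (hXindep.indepFun h01),
      (hXident x i0).map_eq, (hXident y i1).map_eq]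
  have hmean0 : ∀ (x y : Fin n), x ≠ y → ∫ ω, g (X x ω) (X y ω) ∂μ = τ0 := by
    intro x y hxy
    rw [hτ0]
    exact ((hpairID x y hxy).comp hgmeas).integral_eq
  have hZmean : ∀ σ i, ∫ ω, Z σ i ω ∂μ = τ0 := by
    intro σ i
    apply hmean0
    apply σ.injective.ne
    simp [hadef, hbdef, Fin.ext_iff]
  -- independence of the blocks
  have hind : ∀ (σ : Equiv.Perm (Fin n)) (s : Finset (Fin m)) (k : Fin m), k ∉ s →
      IndepFun (∑ i ∈ s, Z σ i) (Z σ k) μ := by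
    intro σ s k hk
    set S : Finset (Fin n) := s.biUnion (fun i => {σ (a i), σ (b i)}) with hSdef
    set T : Finset (Fin n) := {σ (a k), σ (b k)} with hTdef
    have hdistinct : ∀ (i j : Fin m) (x y : Fin n), i ≠ j →
        (x = σ (a i) ∨ x = σ (b i)) → (y = σ (a j) ∨ y = σ (b j)) → x ≠ y := by
      intro i j x y hij hx hy heq
      apply hij
      have : ∀ (u v : Fin n), σ u = σ v → u = v := fun u v h => σ.injective h
      rcases hx with hx | hx <;> rcases hy with hy | hy <;>
        (rw [hx, hy] at heq; have := this _ _ heq;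
         simp only [hadef, hbdef, Fin.ext_iff] at this ⊢; omega)
    have hST : Disjoint S T := by
      rw [Finset.disjoint_left]
      intro x hxS hxT
      rw [hSdef, Finset.mem_biUnion] at hxS
      obtain ⟨i, his, hxi⟩ := hxS
      rw [hTdef, Finset.mem_insert, Finset.mem_singleton] at hxT
      rw [Finset.mem_insert, Finset.mem_singleton] at hxi
      have hik : i ≠ k := fun h => hk (h ▸ his)
      exact hdistinct i k x x hik hxi hxT rfl
    have base := hXindep.indepFun_finset S T hST hXmeas
    have hcS : ∀ i ∈ s, σ (a i) ∈ S := by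
      intro i hi; rw [hSdef, Finset.mem_biUnion]
      exact ⟨i, hi, by simp⟩
    have hdS : ∀ i ∈ s, σ (b i) ∈ S := by
      intro i hi; rw [hSdef, Finset.mem_biUnion]
      exact ⟨i, hi, by simp⟩
    have hcT : σ (a k) ∈ T := by simp [hTdef]
    have hdT : σ (b k) ∈ T := by simp [hTdef]
    set φ : ((i : S) → (Fin p → ℝ)) → ℝ :=
      fun v => ∑ i ∈ s.attach, g (v ⟨σ (a i.1), hcS i.1 i.2⟩) (v ⟨σ (b i.1), hdS i.1 i.2⟩)
      with hφdef
    set ψ : ((i : T) → (Fin p → ℝ)) → ℝ :=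
      fun v => g (v ⟨σ (a k), hcT⟩) (v ⟨σ (b k), hdT⟩) with hψdef
    have hmS : ∀ (j j' : {x // x ∈ S}), Measurable (fun v : (_ : {x // x ∈ S}) → (Fin p → ℝ) => g (v j) (v j')) := by
      intro j j'
      have h1 : Measurable (fun v : (_ : {x // x ∈ S}) → (Fin p → ℝ) => (v j, v j')) :=
        (measurable_pi_apply j).prodMk (measurable_pi_apply j')
      exact hgmeas.comp h1
    have hmT : ∀ (j j' : {x // x ∈ T}), Measurable (fun v : (_ : {x // x ∈ T}) → (Fin p → ℝ) => g (v j) (v j')) := by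
      intro j j'
      have h1 : Measurable (fun v : (_ : {x // x ∈ T}) → (Fin p → ℝ) => (v j, v j')) :=
        (measurable_pi_apply j).prodMk (measurable_pi_apply j')
      exact hgmeas.comp h1
    have hφmeas : Measurable φ := by
      apply Finset.measurable_sum
      intro i _
      exact hmS _ _
    have hψmeas : Measurable ψ := hmT _ _
    have hcomp := base.comp hφmeas hψmeas
    have heq1 : (φ ∘ fun ω (i : S) => X i ω) = ∑ i ∈ s, Z σ i := by
      funext ω
      simp only [Function.comp_apply, hφdef, Finset.sum_apply]
      rw [← Finset.sum_attach s (fun i => Z σ i ω)]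
    have heq2 : (ψ ∘ fun ω (i : T) => X i ω) = Z σ k := rfl
    rw [heq1, heq2] at hcomp
    exact hcomp
  -- the U-statistic and the permutation identity
  set Sfun : Ω → ℝ := fun ω =>
    ∑ q ∈ Finset.univ.filter (fun q : Fin n × Fin n => q.1 < q.2), g (X q.1 ω) (X q.2 ω)
    with hSfundef
  set T0 : Ω → ℝ := fun ω => ∑ σ : Equiv.Perm (Fin n), g (X (σ i0) ω) (X (σ i1) ω) with hT0def
  have hE1 : ∀ (x y : Fin n), x ≠ y → ∀ ω,
      ∑ σ : Equiv.Perm (Fin n), g (X (σ x) ω) (X (σ y) ω) = T0 ω := by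
    intro x y hxy ω
    have h01 : i0 ≠ i1 := by simp [hi0, hi1, Fin.ext_iff]
    obtain ⟨f, hfu, hfv⟩ := exists_perm_pair hxy h01
    rw [hT0def]
    apply Fintype.sum_equiv (Equiv.mulRight f)
    intro σ
    simp [Equiv.Perm.mul_apply, hfu, hfv]
  have hE4 : ∀ ω, ∑ σ : Equiv.Perm (Fin n), ∑ i : Fin m, Z σ i ω = (m : ℝ) * T0 ω := by
    intro ω
    rw [Finset.sum_comm]
    have : ∀ i : Fin m, ∑ σ : Equiv.Perm (Fin n), Z σ i ω = T0 ω := by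
      intro i
      apply hE1
      simp only [hadef, hbdef, ne_eq, Fin.mk.injEq]
      omega
    rw [Finset.sum_congr rfl (fun i _ => this i)]
    simp [mul_comm]
  have hoffcard : ((Finset.univ : Finset (Fin n × Fin n)).filter
      (fun q => q.1 ≠ q.2)).card = n * n - n := by
    have h1 : (Finset.univ : Finset (Fin n × Fin n)).filter (fun q => q.1 ≠ q.2) =
        (Finset.univ : Finset (Fin n)).offDiag := by
      ext q; simp [Finset.mem_offDiag]
    rw [h1, Finset.offDiag_card]
    simp [Finset.card_univ]
  set Soff : Ω → ℝ := fun ω =>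
    ∑ q ∈ Finset.univ.filter (fun q : Fin n × Fin n => q.1 ≠ q.2), g (X q.1 ω) (X q.2 ω)
    with hSoffdef
  have hE2 : ∀ ω, ((n : ℝ) * n - n) * T0 ω = (n.factorial : ℝ) * Soff ω := by
    intro ω
    have lhs : ∑ q ∈ Finset.univ.filter (fun q : Fin n × Fin n => q.1 ≠ q.2),
        (∑ σ : Equiv.Perm (Fin n), g (X (σ q.1) ω) (X (σ q.2) ω)) = ((n:ℝ) * n - n) * T0 ω := by
      rw [Finset.sum_congr rfl (fun (q : Fin n × Fin n) hq => by
        have hq' : q.1 ≠ q.2 := by simpa using (Finset.mem_filter.1 hq).2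
        exact hE1 q.1 q.2 hq' ω)]
      rw [Finset.sum_const, hoffcard, nsmul_eq_mul]
      congr 1
      have h1 : n ≤ n * n := Nat.le_mul_of_pos_left n (by omega)
      push_cast [Nat.cast_sub h1]
      ring
    have rhs : ∑ q ∈ Finset.univ.filter (fun q : Fin n × Fin n => q.1 ≠ q.2),
        (∑ σ : Equiv.Perm (Fin n), g (X (σ q.1) ω) (X (σ q.2) ω)) =
        (n.factorial : ℝ) * Soff ω := by
      rw [Finset.sum_comm]
      have : ∀ σ : Equiv.Perm (Fin n),
          ∑ q ∈ Finset.univ.filter (fun q : Fin n × Fin n => q.1 ≠ q.2),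
            g (X (σ q.1) ω) (X (σ q.2) ω) = Soff ω := by
        intro σ
        rw [hSoffdef]
        apply Finset.sum_nbij' (fun q => (σ q.1, σ q.2)) (fun q => (σ⁻¹ q.1, σ⁻¹ q.2))
        · intro q hq
          simp only [Finset.mem_filter, Finset.mem_univ, true_and] at hq ⊢
          exact fun h => hq (σ.injective h)
        · intro q hq
          simp only [Finset.mem_filter, Finset.mem_univ, true_and] at hq ⊢
          exact fun h => hq (σ⁻¹.injective h)
        · intro q _; simp
        · intro q _; simp
        · intro q _; rfl
      rw [Finset.sum_congr rfl (fun σ _ => this σ), Finset.sum_const, Finset.card_univ,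
        nsmul_eq_mul]
      congr 1
      rw [Fintype.card_perm, Fintype.card_fin]
    rw [← lhs, rhs]
  have hE3 : ∀ ω, Soff ω = 2 * Sfun ω := by
    intro ω
    have hsplit : Finset.univ.filter (fun q : Fin n × Fin n => q.1 ≠ q.2) =
        (Finset.univ.filter (fun q : Fin n × Fin n => q.1 < q.2)) ∪
        (Finset.univ.filter (fun q : Fin n × Fin n => q.2 < q.1)) := by
      ext q
      simp only [Finset.mem_filter, Finset.mem_univ, true_and, Finset.mem_union]
      constructor
      · intro h; rcases lt_or_gt_of_ne h with h | h; · left; exact h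
        · right; exact h
      · intro h; rcases h with h | h; · exact ne_of_lt h
        · exact (ne_of_lt h).symm
    have hdisj : Disjoint (Finset.univ.filter (fun q : Fin n × Fin n => q.1 < q.2))
        (Finset.univ.filter (fun q : Fin n × Fin n => q.2 < q.1)) := by
      rw [Finset.disjoint_left]
      intro q h1 h2
      simp only [Finset.mem_filter, Finset.mem_univ, true_and] at h1 h2
      exact absurd h1 (not_lt.2 (le_of_lt h2))
    have hswap : ∑ q ∈ Finset.univ.filter (fun q : Fin n × Fin n => q.2 < q.1),
        g (X q.1 ω) (X q.2 ω) = Sfun ω := by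
      rw [hSfundef]
      apply Finset.sum_nbij' (fun q : Fin n × Fin n => (q.2, q.1))
        (fun q : Fin n × Fin n => (q.2, q.1))
      · intro q hq
        simp only [Finset.mem_filter, Finset.mem_univ, true_and] at hq ⊢; exact hq
      · intro q hq
        simp only [Finset.mem_filter, Finset.mem_univ, true_and] at hq ⊢; exact hq
      · intro q _; rfl
      · intro q _; rfl
      · intro q _; exact hgsymm _ _
    have hstep : Soff ω = Sfun ω + ∑ q ∈ Finset.univ.filter
        (fun q : Fin n × Fin n => q.2 < q.1), g (X q.1 ω) (X q.2 ω) := by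
      simp only [hSoffdef, hSfundef]
      rw [hsplit, Finset.sum_union hdisj]
    rw [hstep, hswap]; ring
  -- the centered statistic
  set W : Ω → ℝ := fun ω => (2 / (n * (n - 1) : ℝ)) * Sfun ω - τ0 with hWdef
  have hSmeas : Measurable Sfun := Finset.measurable_sum _ (fun q _ => hgmeas2 q.1 q.2)
  have hWmeas : Measurable W := (hSmeas.const_mul _).sub_const τ0
  have hτ0b : |τ0| ≤ 1 := by
    rw [hτ0]
    have := norm_integral_le_of_norm_le_const (μ := μ) (C := 1)
      (f := fun ω => g (X i0 ω) (X i1 ω)) (ae_of_all _ (fun ω => by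
        rw [Real.norm_eq_abs]; exact hgb _ _))
    simpa [Real.norm_eq_abs] using this
  set F2 : Finset (Fin n × Fin n) := Finset.univ.filter (fun q : Fin n × Fin n => q.1 < q.2)
    with hF2
  have hSb : ∀ ω, |Sfun ω| ≤ (F2.card : ℝ) := by
    intro ω
    simp only [hSfundef]
    calc |∑ q ∈ F2, g (X q.1 ω) (X q.2 ω)| ≤ ∑ q ∈ F2, |g (X q.1 ω) (X q.2 ω)| :=
      Finset.abs_sum_le_sum_abs _ _
    _ ≤ ∑ _q ∈ F2, (1:ℝ) := Finset.sum_le_sum (fun q _ => hgb _ _)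
    _ = (F2.card : ℝ) := by simp
  set CW : ℝ := |2 / ((n:ℝ) * ((n:ℝ) - 1))| * F2.card + 1 with hCW
  have hWb : ∀ ω, |W ω| ≤ CW := by
    intro ω
    simp only [hWdef]
    rw [sub_eq_add_neg]
    refine (abs_add_le _ _).trans ?_
    rw [abs_neg, abs_mul, hCW]
    have h1 := hSb ω
    have h2 : (0:ℝ) ≤ |2 / ((n:ℝ) * ((n:ℝ) - 1))| := abs_nonneg _
    have : (n : ℝ) * ((n:ℝ) - 1) = ((n : ℝ) * (n:ℝ) - (n:ℝ)) := by ring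
    have h3 : |2 / ((n:ℝ) * ((n:ℝ) - 1))| * |Sfun ω| ≤ |2 / ((n:ℝ) * ((n:ℝ) - 1))| * F2.card :=
      mul_le_mul_of_nonneg_left h1 h2
    linarith
  have hibd : ∀ (c : ℝ) (V : Ω → ℝ) (CV : ℝ), Measurable V → (∀ ω, |V ω| ≤ CV) →
      Integrable (fun ω => Real.exp (c * V ω)) μ := by
    intro c V CV hV hVb
    apply integrable_of_bound _ (hV.const_mul c).exp (Real.exp (|c| * CV))
    intro ω
    rw [abs_of_pos (Real.exp_pos _), Real.exp_le_exp]
    calc c * V ω ≤ |c * V ω| := le_abs_self _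
    _ = |c| * |V ω| := abs_mul c _
    _ ≤ |c| * CV := mul_le_mul_of_nonneg_left (hVb ω) (abs_nonneg c)
  have hmR : (0:ℝ) < (m:ℝ) := by exact_mod_cast hm0
  have hfactpos : (0:ℝ) < (n.factorial : ℝ) := by exact_mod_cast n.factorial_pos
  have hnn1 : ((n:ℝ) * ((n:ℝ) - 1)) ≠ 0 := by
    have h2 : (2:ℝ) ≤ (n:ℝ) := by exact_mod_cast hn
    have : (0:ℝ) < (n:ℝ) * ((n:ℝ) - 1) := by nlinarith
    exact this.ne'
  have hWmgf : ∀ s : ℝ, ∫ ω, Real.exp (s * W ω) ∂μ ≤ Real.exp (s ^ 2 / (2 * (m:ℝ))) := by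
    intro s
    set w : ℝ := ((n.factorial : ℝ))⁻¹ with hwdef
    have hw0 : 0 ≤ w := by positivity
    have hwsum : ∑ _σ : Equiv.Perm (Fin n), w = 1 := by
      rw [Finset.sum_const, Finset.card_univ, Fintype.card_perm, Fintype.card_fin,
        nsmul_eq_mul, hwdef, mul_inv_cancel₀ hfactpos.ne']
    set x : Equiv.Perm (Fin n) → Ω → ℝ :=
      fun σ ω => (s / (m:ℝ)) * ∑ i : Fin m, (Z σ i ω - τ0) with hxdef
    have hT0' : ∀ ω, T0 ω = (n.factorial : ℝ) * (2 * Sfun ω) / ((n:ℝ) * ((n:ℝ) - 1)) := by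
      intro ω
      have h2 := hE2 ω
      have h3 := hE3 ω
      rw [eq_div_iff hnn1]
      linear_combination h2 + (n.factorial : ℝ) * h3
    have hiden : ∀ ω, ∑ σ : Equiv.Perm (Fin n), w * x σ ω = s * W ω := by
      intro ω
      have h1 : ∀ σ : Equiv.Perm (Fin n), ∑ i : Fin m, (Z σ i ω - τ0) =
          (∑ i : Fin m, Z σ i ω) - (m:ℝ) * τ0 := by
        intro σ
        rw [Finset.sum_sub_distrib, Finset.sum_const, Finset.card_univ, Fintype.card_fin,
          nsmul_eq_mul]
      have h2 : ∑ σ : Equiv.Perm (Fin n), x σ ω =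
          (s / (m:ℝ)) * ((m:ℝ) * T0 ω - (n.factorial : ℝ) * ((m:ℝ) * τ0)) := by
        simp only [hxdef]
        rw [← Finset.mul_sum]
        congr 1
        rw [Finset.sum_congr rfl (fun σ _ => h1 σ), Finset.sum_sub_distrib, hE4 ω,
          Finset.sum_const, Finset.card_univ, Fintype.card_perm, Fintype.card_fin, nsmul_eq_mul]
      rw [← Finset.mul_sum, h2, hWdef, hT0' ω, hwdef]
      have hfne : (n.factorial : ℝ) ≠ 0 := hfactpos.ne'
      field_simp
    have hjensen : ∀ ω, Real.exp (s * W ω) ≤ ∑ σ : Equiv.Perm (Fin n), w * Real.exp (x σ ω) := by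
      intro ω
      have h := convexOn_exp.map_sum_le (t := (Finset.univ : Finset (Equiv.Perm (Fin n))))
        (w := fun _ => w) (p := fun σ => x σ ω) (fun _ _ => hw0) hwsum
        (fun _ _ => Set.mem_univ _)
      simp only [smul_eq_mul] at h
      rw [hiden ω] at h
      exact h
    have hxmeas : ∀ σ, Measurable (x σ) := by
      intro σ
      exact (Finset.measurable_sum _ (fun i _ => (hZmeas σ i).sub_const τ0)).const_mul _
    have hxsummeas : ∀ σ, Measurable (fun ω => ∑ i : Fin m, (Z σ i ω - τ0)) :=
      fun σ => Finset.measurable_sum _ (fun i _ => (hZmeas σ i).sub_const τ0)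
    have hxsumb : ∀ σ ω, |∑ i : Fin m, (Z σ i ω - τ0)| ≤ 2 * (m:ℝ) := by
      intro σ ω
      calc |∑ i : Fin m, (Z σ i ω - τ0)| ≤ ∑ i : Fin m, |Z σ i ω - τ0| :=
        Finset.abs_sum_le_sum_abs _ _
      _ ≤ ∑ _i : Fin m, (2:ℝ) := Finset.sum_le_sum (fun i _ => by
          rw [sub_eq_add_neg]
          refine (abs_add_le _ _).trans ?_
          rw [abs_neg]
          linarith [hZb σ i ω, hτ0b])
      _ = 2 * (m:ℝ) := by simp [mul_comm]
    have hint1 : Integrable (fun ω => Real.exp (s * W ω)) μ := hibd s W CW hWmeas hWb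
    have hint2 : Integrable (fun ω => ∑ σ : Equiv.Perm (Fin n), w * Real.exp (x σ ω)) μ := by
      apply integrable_finset_sum
      intro σ _
      exact (hibd (s / (m:ℝ)) _ (2 * (m:ℝ)) (hxsummeas σ) (hxsumb σ)).const_mul w
    calc ∫ ω, Real.exp (s * W ω) ∂μ
        ≤ ∫ ω, ∑ σ : Equiv.Perm (Fin n), w * Real.exp (x σ ω) ∂μ :=
          integral_mono hint1 hint2 hjensen
    _ = ∑ σ : Equiv.Perm (Fin n), w * ∫ ω, Real.exp (x σ ω) ∂μ := by
        rw [integral_finset_sum _ (fun σ _ =>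
          (hibd (s / (m:ℝ)) _ (2 * (m:ℝ)) (hxsummeas σ) (hxsumb σ)).const_mul w)]
        exact Finset.sum_congr rfl (fun σ _ => integral_const_mul w _)
    _ ≤ ∑ _σ : Equiv.Perm (Fin n), w * Real.exp (s ^ 2 / (2 * (m:ℝ))) := by
        apply Finset.sum_le_sum
        intro σ _
        apply mul_le_mul_of_nonneg_left _ hw0
        have := mgf_sum_le (μ := μ) (Z σ) (hZmeas σ) (hZb σ) τ0 (hZmean σ) (hind σ) (s / (m:ℝ))
        have harg : (m:ℝ) * (s / (m:ℝ)) ^ 2 / 2 = s ^ 2 / (2 * (m:ℝ)) := by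
          field_simp
        rw [harg] at this
        exact this
    _ = Real.exp (s ^ 2 / (2 * (m:ℝ))) := by
        rw [← Finset.sum_mul, hwsum, one_mul]
  have := tail_bound (μ := μ) W hWmeas CW hWb (m:ℝ) hmR hWmgf t ht
  simpa [hWdef, hSfundef] using this

end Aux

lemma sin_lip (a b : ℝ) : |Real.sin a - Real.sin b| ≤ |a - b| := by
  rw [Real.sin_sub_sin, abs_mul, abs_mul, abs_two]
  have h1 := Real.abs_sin_le_abs (x := (a - b) / 2)
  have h2 := Real.abs_cos_le_one ((a + b) / 2)
  have h3 : |(a - b) / 2| = |a - b| / 2 := by rw [abs_div, abs_two]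
  nlinarith [abs_nonneg (Real.sin ((a - b) / 2)), abs_nonneg (a - b)]

/-- Quantitative sure screening (Theorem 1): with `n` i.i.d. observation rows
`X i : Ω → ℝ^p`, sample Kendall's tau `τ̂_{jj'}`, population `τ_{jj'}`,
`ρ_{jj'} = sin((π/2)τ_{jj'})`, `log p = C₃n^ξ` with `ξ ∈ (0,1−2κ)`, and
`min_{(j,j')∈E}|ρ_{jj'}| ≥ C₁n^{−κ}`, the threshold `γ_n = (2/3)C₁n^{−κ}` gives
`Pr(E ⊆ Ê_{γ_n}) ≥ 1 − 2p² exp(−(2⌊n/2⌋/(9π²))C₁²n^{−2κ})`. -/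
theorem stmt18 {Ω : Type*} [MeasurableSpace Ω] (μ : Measure Ω) [IsProbabilityMeasure μ]
    (p n : ℕ) (hn : 2 ≤ n)
    (X : Fin n → Ω → (Fin p → ℝ))
    (hXmeas : ∀ i, Measurable (X i))
    (hXindep : iIndepFun X μ)
    (hXident : ∀ i i', IdentDistrib (X i) (X i') μ μ)
    (C₁ κ ξ C₃ : ℝ) (hC₁ : 0 < C₁) (hκ₀ : 0 < κ) (hκ : κ < 1 / 2)
    (hξ₀ : 0 < ξ) (hξ : ξ < 1 - 2 * κ) (hC₃ : 0 < C₃)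
    (hlogp : Real.log p = C₃ * (n : ℝ) ^ ξ)
    (τhat : Fin p × Fin p → Ω → ℝ)
    (hτhat : ∀ e : Fin p × Fin p, τhat e = fun ω => (2 / (n * (n - 1) : ℝ)) *
      ∑ q ∈ Finset.univ.filter (fun q : Fin n × Fin n => q.1 < q.2),
        Real.sign ((X q.1 ω e.1 - X q.2 ω e.1) * (X q.1 ω e.2 - X q.2 ω e.2)))
    (τ ρ : Fin p × Fin p → ℝ)
    (hτ : ∀ e : Fin p × Fin p, τ e = ∫ ω, Real.sign
      ((X ⟨0, by omega⟩ ω e.1 - X ⟨1, by omega⟩ ω e.1) *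
       (X ⟨0, by omega⟩ ω e.2 - X ⟨1, by omega⟩ ω e.2)) ∂μ)
    (hρ : ∀ e, ρ e = Real.sin (Real.pi / 2 * τ e))
    (E : Finset (Fin p × Fin p)) (hE : ∀ e ∈ E, e.1 < e.2)
    (hmin : ∀ e ∈ E, C₁ * (n : ℝ) ^ (-κ) ≤ |ρ e|) :
    1 - ENNReal.ofReal (2 * p ^ 2 *
        Real.exp (-(2 * (n / 2 : ℕ) / (9 * Real.pi ^ 2)) * C₁ ^ 2 * (n : ℝ) ^ (-(2 * κ)))) ≤
      μ {ω | (E : Set (Fin p × Fin p)) ⊆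
        {e | e.1 < e.2 ∧ (2 / 3) * C₁ * (n : ℝ) ^ (-κ) <
          |Real.sin (Real.pi / 2 * τhat e ω)|}} := by
  classical
  have hπ : 0 < Real.pi := Real.pi_pos
  have hn0 : (0:ℝ) < (n:ℝ) := by
    have : (2:ℝ) ≤ (n:ℝ) := by exact_mod_cast hn
    linarith
  have hnk : (0:ℝ) < (n:ℝ) ^ (-κ) := Real.rpow_pos_of_pos hn0 _
  set t : ℝ := 2 / (3 * Real.pi) * (C₁ * (n:ℝ) ^ (-κ)) with htdef
  have ht : 0 < t := by
    apply mul_pos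
    · positivity
    · positivity
  set B : Fin p × Fin p → Set Ω := fun e => {ω | t ≤ |τhat e ω - τ e|} with hBdef
  have hτhatmeas : ∀ e, Measurable (τhat e) := by
    intro e
    rw [hτhat e]
    apply Measurable.const_mul
    apply Finset.measurable_sum
    intro q _
    apply measurable_realSign.comp
    exact (((measurable_pi_apply e.1).comp (hXmeas q.1)).sub
        ((measurable_pi_apply e.1).comp (hXmeas q.2))).mul
      (((measurable_pi_apply e.2).comp (hXmeas q.1)).sub
        ((measurable_pi_apply e.2).comp (hXmeas q.2)))
  have hBmeas : ∀ e, MeasurableSet (B e) := by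
    intro e
    exact measurableSet_le measurable_const ((hτhatmeas e).sub_const _).abs
  have hBbound : ∀ e ∈ E, μ (B e) ≤
      ENNReal.ofReal (2 * Real.exp (-(((n / 2 : ℕ) : ℝ) * t ^ 2 / 2))) := by
    intro e he
    set g : (Fin p → ℝ) → (Fin p → ℝ) → ℝ :=
      fun x y => Real.sign ((x e.1 - y e.1) * (x e.2 - y e.2)) with hgdef
    have hgmeas : Measurable (fun z : (Fin p → ℝ) × (Fin p → ℝ) => g z.1 z.2) := by
      apply measurable_realSign.comp
      exact (((measurable_pi_apply e.1).comp measurable_fst).sub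
          ((measurable_pi_apply e.1).comp measurable_snd)).mul
        (((measurable_pi_apply e.2).comp measurable_fst).sub
          ((measurable_pi_apply e.2).comp measurable_snd))
    have hgb : ∀ x y, |g x y| ≤ 1 := fun x y => abs_realSign_le _
    have hgsymm : ∀ x y, g x y = g y x := by
      intro x y
      simp only [hgdef]
      congr 1
      ring
    have hτ0 : τ e = ∫ ω, g (X ⟨0, by omega⟩ ω) (X ⟨1, by omega⟩ ω) ∂μ := hτ e
    have hpt := pair_tail_bound hn X hXmeas hXindep hXident g hgmeas hgb hgsymm (by omega) (by omega) (τ e) hτ0 t ht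
    have hBeq : B e = {ω | t ≤ |(2 / (n * (n - 1) : ℝ)) *
        (∑ q ∈ Finset.univ.filter (fun q : Fin n × Fin n => q.1 < q.2),
          g (X q.1 ω) (X q.2 ω)) - τ e|} := by
      simp only [hBdef, hτhat e, hgdef]
    rw [hBeq]
    exact hpt
  -- exponent arithmetic
  have hpow : ((n:ℝ) ^ (-κ)) ^ 2 = (n:ℝ) ^ (-(2*κ)) := by
    rw [← Real.rpow_natCast ((n:ℝ) ^ (-κ)) 2, ← Real.rpow_mul hn0.le]
    norm_num
    congr 1
    ring
  have ht2 : t ^ 2 = 4 / (9 * Real.pi ^ 2) * C₁ ^ 2 * (n:ℝ) ^ (-(2*κ)) := by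
    rw [htdef, mul_pow, mul_pow, hpow, div_pow, mul_pow]
    norm_num
    ring
  have hexp : -(((n / 2 : ℕ) : ℝ) * t ^ 2 / 2) =
      -(2 * ((n / 2 : ℕ) : ℝ) / (9 * Real.pi ^ 2)) * C₁ ^ 2 * (n : ℝ) ^ (-(2 * κ)) := by
    rw [ht2]
    have hπne : Real.pi ≠ 0 := hπ.ne'
    field_simp
    ring
  set U : Set Ω := ⋃ e ∈ E, B e with hUdef
  have hUmeas : MeasurableSet U :=
    MeasurableSet.biUnion E.countable_toSet (fun e _ => hBmeas e)
  have hcard : E.card ≤ p ^ 2 := by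
    calc E.card ≤ Fintype.card (Fin p × Fin p) := Finset.card_le_univ E
    _ = p ^ 2 := by simp [sq]
  have hUb : μ U ≤ ENNReal.ofReal (2 * (p:ℝ) ^ 2 *
      Real.exp (-(((n / 2 : ℕ) : ℝ) * t ^ 2 / 2))) := by
    calc μ U ≤ ∑ e ∈ E, μ (B e) := measure_biUnion_finset_le E B
    _ ≤ ∑ _e ∈ E, ENNReal.ofReal (2 * Real.exp (-(((n / 2 : ℕ) : ℝ) * t ^ 2 / 2))) :=
        Finset.sum_le_sum (fun e he => hBbound e he)
    _ = (E.card : ℝ≥0∞) * ENNReal.ofReal (2 * Real.exp (-(((n / 2 : ℕ) : ℝ) * t ^ 2 / 2))) := by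
        rw [Finset.sum_const, nsmul_eq_mul]
    _ ≤ ((p ^ 2 : ℕ) : ℝ≥0∞) * ENNReal.ofReal (2 * Real.exp (-(((n / 2 : ℕ) : ℝ) * t ^ 2 / 2))) :=
        mul_le_mul_left (by exact_mod_cast Nat.cast_le.2 hcard) _
    _ = ENNReal.ofReal (2 * (p:ℝ) ^ 2 * Real.exp (-(((n / 2 : ℕ) : ℝ) * t ^ 2 / 2))) := by
        rw [← ENNReal.ofReal_natCast (p ^ 2), ← ENNReal.ofReal_mul (by positivity)]
        congr 1
        push_cast
        ring
  have hsub : Uᶜ ⊆ {ω | (E : Set (Fin p × Fin p)) ⊆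
      {e | e.1 < e.2 ∧ (2 / 3) * C₁ * (n : ℝ) ^ (-κ) <
        |Real.sin (Real.pi / 2 * τhat e ω)|}} := by
    intro ω hω
    intro e he'
    have he : e ∈ E := he'
    refine ⟨hE e he, ?_⟩
    have hnotin : ω ∉ B e := fun h => hω (Set.mem_biUnion he h)
    have hlt : |τhat e ω - τ e| < t := by
      by_contra h
      exact hnotin (le_of_not_gt h)
    have hsin : |Real.sin (Real.pi / 2 * τhat e ω) - ρ e| ≤ Real.pi / 2 * |τhat e ω - τ e| := by
      rw [hρ e]
      refine (sin_lip _ _).trans ?_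
      rw [← mul_sub, abs_mul, abs_of_pos (by positivity : (0:ℝ) < Real.pi / 2)]
    have hsin2 : |Real.sin (Real.pi / 2 * τhat e ω) - ρ e| < Real.pi / 2 * t :=
      lt_of_le_of_lt hsin (by
        apply mul_lt_mul_of_pos_left hlt (by positivity))
    have hhalf : Real.pi / 2 * t = 1 / 3 * (C₁ * (n:ℝ) ^ (-κ)) := by
      rw [htdef]
      field_simp
    rw [hhalf] at hsin2
    have habs := abs_sub_abs_le_abs_sub (ρ e) (Real.sin (Real.pi / 2 * τhat e ω))
    rw [abs_sub_comm] at habs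
    have h4 := hmin e he
    show (2 / 3) * C₁ * (n : ℝ) ^ (-κ) < |Real.sin (Real.pi / 2 * τhat e ω)|
    linarith
  calc 1 - ENNReal.ofReal (2 * (p:ℝ) ^ 2 *
        Real.exp (-(2 * ((n / 2 : ℕ) : ℝ) / (9 * Real.pi ^ 2)) * C₁ ^ 2 * (n : ℝ) ^ (-(2 * κ))))
      = 1 - ENNReal.ofReal (2 * (p:ℝ) ^ 2 *
        Real.exp (-(((n / 2 : ℕ) : ℝ) * t ^ 2 / 2))) := by rw [← hexp]
  _ ≤ 1 - μ U := tsub_le_tsub_left hUb 1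
  _ = μ Uᶜ := (prob_compl_eq_one_sub hUmeas).symm
  _ ≤ μ {ω | (E : Set (Fin p × Fin p)) ⊆
      {e | e.1 < e.2 ∧ (2 / 3) * C₁ * (n : ℝ) ^ (-κ) <
        |Real.sin (Real.pi / 2 * τhat e ω)|}} := measure_mono hsub
end
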